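/- arXiv:1701.04954 — 4 statements merged into one kernel-verified Lean document; each statement's English description precedes it below -/
import Mathlib

section
/- Let L be a positive integer, 0 ≤ w_s ≤ L an integer, and δ a real number with 0 < δ ≤ 1/2. Then σ(L,δ,w_s/L) ≥ (1/L)·log(Σ_{j=w_s}^{L} C(L,j)) − h(δ), where C(a,b) denotes the binomial coefficient (asymptotic Gilbert–Varshamov bound for SECCs). -/
open Finset Filter

/-- Weight (number of ones) of a binary word. -/
def wt {n : ℕ} (x : Fin n → Bool) : ℕ := (Finset.univ.filter fun i => x i = true).card

/-- The index (in a word of length `m * L`) of position `j` of subblock `i`. -/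
def subIdx (m L : ℕ) (i : Fin m) (j : Fin L) : Fin (m * L) :=
  ⟨i.val * L + j.val, by
    have hj : j.val < L := j.isLt
    have hi : i.val + 1 ≤ m := i.isLt
    calc i.val * L + j.val < i.val * L + L := Nat.add_lt_add_left hj _
      _ = (i.val + 1) * L := by ring
      _ ≤ m * L := Nat.mul_le_mul hi (Nat.le_refl L)⟩

/-- The `i`-th subblock (of length `L`) of a binary word of length `m * L`. -/
def subblock (m L : ℕ) (x : Fin (m * L) → Bool) (i : Fin m) : Fin L → Bool :=
  fun j => x (subIdx m L i j)

/-- The CSCC space: binary words of length `m * L` each of whose `m` subblocks of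
length `L` has weight exactly `w`. -/
def CSCCspace (m L w : ℕ) : Set (Fin (m * L) → Bool) :=
  {x | ∀ i : Fin m, wt (subblock m L x i) = w}

/-- The SECC space: binary words of length `m * L` each of whose `m` subblocks of
length `L` has weight at least `w`. -/
def SECCspace (m L w : ℕ) : Set (Fin (m * L) → Bool) :=
  {x | ∀ i : Fin m, w ≤ wt (subblock m L x i)}

/-- A code with minimum distance `d` inside the space `Sp`. -/
def isCode {n : ℕ} (Sp : Set (Fin n → Bool)) (d : ℕ) (C : Finset (Fin n → Bool)) : Prop :=
  (↑C : Set (Fin n → Bool)) ⊆ Sp ∧ ∀ x ∈ C, ∀ y ∈ C, x ≠ y → d ≤ hammingDist x y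

/-- The ball of radius `t` around `x`, taken inside the space `Sp`. -/
def ball {n : ℕ} (Sp : Set (Fin n → Bool)) (x : Fin n → Bool) (t : ℕ) :
    Set (Fin n → Bool) :=
  {y | y ∈ Sp ∧ hammingDist x y ≤ t}

/-- `C(m,L,d,w)`: the maximum size of an `(m,L,d,w)`-CSCC. -/
noncomputable def maxCSCC (m L d w : ℕ) : ℕ :=
  sSup {k | ∃ C : Finset (Fin (m * L) → Bool), isCode (CSCCspace m L w) d C ∧ C.card = k}

/-- `S(m,L,d,w)`: the maximum size of an `(m,L,d,w)`-SECC. -/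
noncomputable def maxSECC (m L d w : ℕ) : ℕ :=
  sSup {k | ∃ C : Finset (Fin (m * L) → Bool), isCode (SECCspace m L w) d C ∧ C.card = k}

/-- `A(n,d,w)`: the maximum size of a constant weight code. -/
noncomputable def maxCWC (n d w : ℕ) : ℕ :=
  sSup {k | ∃ C : Finset (Fin n → Bool), isCode {x | wt x = w} d C ∧ C.card = k}

/-- `H(n,d,w)`: the maximum size of a heavy weight code. -/
noncomputable def maxHWC (n d w : ℕ) : ℕ :=
  sSup {k | ∃ C : Finset (Fin n → Bool), isCode {x | w ≤ wt x} d C ∧ C.card = k}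

/-- `A(n,d)`: the maximum size of a binary code of length `n` and distance `d`. -/
noncomputable def maxBinary (n d : ℕ) : ℕ :=
  sSup {k | ∃ C : Finset (Fin n → Bool),
    (∀ x ∈ C, ∀ y ∈ C, x ≠ y → d ≤ hammingDist x y) ∧ C.card = k}

/-- `A_q(n,d)`: the maximum size of a `q`-ary code of length `n` and distance `d`. -/
noncomputable def maxQary (q n d : ℕ) : ℕ :=
  sSup {k | ∃ C : Finset (Fin n → Fin q),
    (∀ x ∈ C, ∀ y ∈ C, x ≠ y → d ≤ hammingDist x y) ∧ C.card = k}

/-- The size of a radius-`r` CSCC ball: the sum over all tuples `(u_1, …, u_m)` with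
`0 ≤ u_i ≤ min{w, L-w}` and `2(u_1 + ⋯ + u_m) ≤ r` of `∏ i, C(w,u_i)·C(L-w,u_i)`. -/
def csccBallSize (m L w r : ℕ) : ℕ :=
  ∑ u ∈ (Finset.univ : Finset (Fin m → Fin (min w (L - w) + 1))).filter
      (fun u => 2 * (∑ i, (u i : ℕ)) ≤ r),
    ∏ i, (w.choose (u i : ℕ)) * ((L - w).choose (u i : ℕ))

/-- The binary entropy function (base-2 logarithms, `h 0 = h 1 = 0`). -/
noncomputable def binent (p : ℝ) : ℝ :=
  -(p * Real.logb 2 p) - (1 - p) * Real.logb 2 (1 - p)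

/-- The asymptotic CSCC rate `γ(L,δ,w/L)`. -/
noncomputable def gammaRate (L : ℕ) (δ : ℝ) (w : ℕ) : ℝ :=
  Filter.limsup (fun m : ℕ =>
    Real.logb 2 (maxCSCC m L ⌊(m : ℝ) * L * δ⌋₊ w) / ((m : ℝ) * L)) Filter.atTop

/-- The asymptotic SECC rate `σ(L,δ,w/L)`. -/
noncomputable def sigmaRate (L : ℕ) (δ : ℝ) (w : ℕ) : ℝ :=
  Filter.limsup (fun m : ℕ =>
    Real.logb 2 (maxSECC m L ⌊(m : ℝ) * L * δ⌋₊ w) / ((m : ℝ) * L)) Filter.atTop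


lemma card_wt_eq (n j : ℕ) :
    (Finset.univ.filter fun y : Fin n → Bool => wt y = j).card = n.choose j := by
  have h := Finset.card_powersetCard j (Finset.univ : Finset (Fin n))
  rw [Finset.card_univ, Fintype.card_fin] at h
  rw [← h]
  apply Finset.card_bij' (fun y _ => Finset.univ.filter fun k => y k = true)
    (fun s _ => fun k => decide (k ∈ s))
  · intro y hy
    funext k; simp
  · intro s hs
    ext k; simp
  · intro y hy
    simp only [Finset.mem_coe, Finset.mem_filter, Finset.mem_univ, true_and, wt] at hy
    rw [Finset.mem_powersetCard]
    exact ⟨fun k _ => Finset.mem_univ k, (Finset.mem_filter.mp hy).2⟩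
  · intro s hs
    rw [Finset.mem_powersetCard] at hs
    refine Finset.mem_filter.mpr ⟨Finset.mem_univ _, ?_⟩
    simp only [wt]
    rw [← hs.2]
    congr 1
    ext k
    simp

lemma wt_le {n : ℕ} (y : Fin n → Bool) : wt y ≤ n := by
  have := Finset.card_filter_le (Finset.univ : Finset (Fin n)) (fun i => y i = true)
  simpa [wt] using this

lemma card_wt_ge (L w : ℕ) :
    (Finset.univ.filter fun y : Fin L → Bool => w ≤ wt y).card
      = ∑ j ∈ Finset.Icc w L, L.choose j := by
  have hset : (Finset.univ.filter fun y : Fin L → Bool => w ≤ wt y)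
      = (Finset.Icc w L).biUnion fun j => Finset.univ.filter fun y => wt y = j := by
    ext y
    simp only [Finset.mem_filter, Finset.mem_univ, true_and, Finset.mem_biUnion,
      Finset.mem_Icc]
    constructor
    · intro h; exact ⟨wt y, ⟨h, wt_le y⟩, rfl⟩
    · rintro ⟨j, ⟨h1, _⟩, rfl⟩; exact h1
  rw [hset, Finset.card_biUnion]
  · exact Finset.sum_congr rfl fun j _ => card_wt_eq L j
  · intro a _ b _ hab
    simp only [Finset.disjoint_left, Finset.mem_filter]
    rintro y ⟨_, rfl⟩ ⟨_, h2⟩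
    exact hab h2

lemma card_dist_eq_le {n : ℕ} (c : Fin n → Bool) (i : ℕ) :
    (Finset.univ.filter fun y : Fin n → Bool => hammingDist c y = i).card ≤ n.choose i := by
  have h := Finset.card_powersetCard i (Finset.univ : Finset (Fin n))
  rw [Finset.card_univ, Fintype.card_fin] at h
  rw [← h]
  apply Finset.card_le_card_of_injOn (fun y => Finset.univ.filter fun k => ¬ c k = y k)
  · intro y hy
    simp only [Finset.mem_coe, Finset.mem_filter, Finset.mem_univ, true_and] at hy
    rw [Finset.mem_coe, Finset.mem_powersetCard]
    refine ⟨fun k _ => Finset.mem_univ k, ?_⟩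
    rw [← hy]
    rfl
  · intro y1 h1 y2 h2 heq
    dsimp only at heq
    funext k
    have hk : (¬ c k = y1 k) ↔ (¬ c k = y2 k) := by
      constructor <;> intro hh
      · have : k ∈ Finset.univ.filter fun k => ¬ c k = y2 k := by
          rw [← heq]; simp [hh]
        simpa using this
      · have : k ∈ Finset.univ.filter fun k => ¬ c k = y1 k := by
          rw [heq]; simp [hh]
        simpa using this
    by_cases hc : c k = y1 k
    · have : c k = y2 k := by
        by_contra hcc
        exact (hk.mpr hcc) hc
      rw [← hc, this]
    · have hc2 : ¬ c k = y2 k := hk.mp hc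
      cases hb : c k <;> revert hc hc2 <;> cases y1 k <;> cases y2 k <;> simp [hb]

lemma card_ball_le {n : ℕ} (c : Fin n → Bool) (r : ℕ) :
    (Finset.univ.filter fun y : Fin n → Bool => hammingDist c y ≤ r).card
      ≤ ∑ i ∈ Finset.range (r + 1), n.choose i := by
  have hset : (Finset.univ.filter fun y : Fin n → Bool => hammingDist c y ≤ r)
      = (Finset.range (r + 1)).biUnion fun i =>
          Finset.univ.filter fun y => hammingDist c y = i := by
    ext y
    simp only [Finset.mem_filter, Finset.mem_univ, true_and, Finset.mem_biUnion,
      Finset.mem_range, Nat.lt_succ_iff]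
    constructor
    · intro hy; exact ⟨_, hy, rfl⟩
    · rintro ⟨i, h1, rfl⟩; exact h1
  rw [hset]
  calc _ ≤ ∑ i ∈ Finset.range (r + 1),
        (Finset.univ.filter fun y : Fin n → Bool => hammingDist c y = i).card :=
      Finset.card_biUnion_le
    _ ≤ _ := Finset.sum_le_sum fun i _ => card_dist_eq_le c i
def blockEquiv (m L : ℕ) (hL : 0 < L) : Fin m × Fin L ≃ Fin (m * L) where
  toFun p := subIdx m L p.1 p.2
  invFun k := (⟨k.val / L, by
      rw [Nat.div_lt_iff_lt_mul hL]; exact k.isLt⟩,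
    ⟨k.val % L, Nat.mod_lt _ hL⟩)
  left_inv p := by
    obtain ⟨i, j⟩ := p
    have h1 : (i.val * L + j.val) / L = i.val := by
      rw [Nat.add_comm, Nat.add_mul_div_right _ _ hL, Nat.div_eq_of_lt j.isLt, Nat.zero_add]
    have h2 : (i.val * L + j.val) % L = j.val := by
      rw [Nat.add_comm, Nat.add_mul_mod_self_right, Nat.mod_eq_of_lt j.isLt]
    simp only [subIdx, Prod.mk.injEq]
    exact ⟨Fin.ext h1, Fin.ext h2⟩
  right_inv k := by
    apply Fin.ext
    simp only [subIdx]
    rw [Nat.mul_comm]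
    exact Nat.div_add_mod _ _

noncomputable def funEquiv (m L : ℕ) (hL : 0 < L) :
    (Fin (m * L) → Bool) ≃ (Fin m → Fin L → Bool) :=
  ((blockEquiv m L hL).arrowCongr (Equiv.refl Bool)).symm.trans
    (Equiv.curry _ _ _)

lemma funEquiv_apply (m L : ℕ) (hL : 0 < L) (x : Fin (m * L) → Bool) (i : Fin m) :
    funEquiv m L hL x i = subblock m L x i := by
  funext j; rfl

lemma card_space (m L w : ℕ) (hL : 0 < L) :
    (Finset.univ.filter fun x : Fin (m * L) → Bool =>
        ∀ i : Fin m, w ≤ wt (subblock m L x i)).card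
      = (Finset.univ.filter fun y : Fin L → Bool => w ≤ wt y).card ^ m := by
  rw [← Fintype.card_subtype]
  have e1 : {x : Fin (m * L) → Bool // ∀ i : Fin m, w ≤ wt (subblock m L x i)}
      ≃ {g : Fin m → Fin L → Bool // ∀ i : Fin m, w ≤ wt (g i)} :=
    (funEquiv m L hL).subtypeEquiv (fun x => by
      constructor <;> intro h i
      · rw [funEquiv_apply]; exact h i
      · have := h i; rwa [funEquiv_apply] at this)
  have e2 : {g : Fin m → Fin L → Bool // ∀ i : Fin m, w ≤ wt (g i)}
      ≃ ∀ _ : Fin m, {y : Fin L → Bool // w ≤ wt y} := Equiv.subtypePiEquivPi (p := fun _ y => w ≤ wt y)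
  rw [Fintype.card_congr (e1.trans e2), Fintype.card_pi]
  rw [Fintype.card_subtype]
  simp
lemma entropy_bound (n d : ℕ) (δ : ℝ) (hδ0 : 0 < δ) (hδ : δ ≤ 1 / 2)
    (hd : (d : ℝ) ≤ (n : ℝ) * δ) :
    ((∑ i ∈ Finset.range (d + 1), n.choose i : ℕ) : ℝ)
      ≤ (2 : ℝ) ^ ((n : ℝ) * binent δ) := by
  set q : ℝ := 1 - δ with hqdef
  have hδ1 : δ < 1 := lt_of_le_of_lt hδ (by norm_num)
  have hq0 : 0 < q := by simp [hqdef]; linarith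
  have hδq : δ ≤ q := by simp [hqdef]; linarith
  have hdn : d ≤ n := by
    have : (d : ℝ) ≤ (n : ℝ) := le_trans hd (by nlinarith [Nat.cast_nonneg (α := ℝ) n])
    exact_mod_cast this
  -- the key quantity
  set A : ℝ := (2 : ℝ) ^ (-((n : ℝ) * binent δ)) with hAdef
  have hApos : 0 < A := Real.rpow_pos_of_pos (by norm_num) _
  -- A as a product of rpows
  have hA : A = δ ^ ((n : ℝ) * δ) * q ^ ((n : ℝ) - (n : ℝ) * δ) := by
    have h1 : -((n : ℝ) * binent δ)
        = Real.logb 2 δ * ((n : ℝ) * δ) + Real.logb 2 q * ((n : ℝ) - (n : ℝ) * δ) := by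
      simp only [binent, hqdef]; ring
    rw [hAdef, h1, Real.rpow_add (by norm_num : (0:ℝ) < 2),
      Real.rpow_mul (by norm_num : (0:ℝ) ≤ 2), Real.rpow_mul (by norm_num : (0:ℝ) ≤ 2),
      Real.rpow_logb (by norm_num) (by norm_num) hδ0,
      Real.rpow_logb (by norm_num) (by norm_num) hq0]
  -- rewriting δ^e * q^(n-e) as q^n * (δ/q)^e
  have hform : ∀ e : ℝ, δ ^ e * q ^ ((n : ℝ) - e) = q ^ (n : ℝ) * (δ / q) ^ e := by
    intro e
    have hδq' : δ = q * (δ / q) := by field_simp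
    calc δ ^ e * q ^ ((n : ℝ) - e) = (q * (δ / q)) ^ e * q ^ ((n:ℝ) - e) := by rw [← hδq']
      _ = q ^ e * (δ / q) ^ e * q ^ ((n:ℝ) - e) := by
          rw [Real.mul_rpow (le_of_lt hq0) (le_of_lt (div_pos hδ0 hq0))]
      _ = (q ^ e * q ^ ((n:ℝ) - e)) * (δ / q) ^ e := by ring
      _ = q ^ (n : ℝ) * (δ / q) ^ e := by
          rw [← Real.rpow_add hq0]; ring_nf
  -- term bound : A ≤ δ^i * q^(n-i) for i ≤ d
  have hterm : ∀ i ∈ Finset.range (d + 1), A ≤ δ ^ i * q ^ (n - i) := by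
    intro i hi
    rw [Finset.mem_range, Nat.lt_succ_iff] at hi
    have hin : i ≤ n := le_trans hi hdn
    have hcast : (δ : ℝ) ^ i * q ^ (n - i) = δ ^ ((i : ℕ) : ℝ) * q ^ ((n : ℝ) - (i : ℝ)) := by
      rw [Real.rpow_natCast, ← Nat.cast_sub hin, Real.rpow_natCast]
    rw [hcast, hA, hform, hform]
    have hbase0 : 0 < δ / q := div_pos hδ0 hq0
    have hbase1 : δ / q ≤ 1 := (div_le_one hq0).mpr hδq
    have hie : (i : ℝ) ≤ (n : ℝ) * δ := le_trans (by exact_mod_cast hi) hd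
    have := Real.rpow_le_rpow_of_exponent_ge hbase0 hbase1 hie
    exact mul_le_mul_of_nonneg_left this (le_of_lt (Real.rpow_pos_of_pos hq0 _))
  -- sum bound
  have hsum : ((∑ i ∈ Finset.range (d + 1), n.choose i : ℕ) : ℝ) * A ≤ 1 := by
    push_cast
    rw [Finset.sum_mul]
    calc ∑ i ∈ Finset.range (d + 1), (n.choose i : ℝ) * A
        ≤ ∑ i ∈ Finset.range (d + 1), δ ^ i * q ^ (n - i) * (n.choose i : ℝ) := by
          apply Finset.sum_le_sum
          intro i hi
          have := hterm i hi
          calc (n.choose i : ℝ) * A ≤ (n.choose i : ℝ) * (δ ^ i * q ^ (n - i)) :=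
                mul_le_mul_of_nonneg_left this (by positivity)
            _ = δ ^ i * q ^ (n - i) * (n.choose i : ℝ) := by ring
      _ ≤ ∑ i ∈ Finset.range (n + 1), δ ^ i * q ^ (n - i) * (n.choose i : ℝ) := by
          apply Finset.sum_le_sum_of_subset_of_nonneg
          · exact Finset.range_subset_range.mpr (Nat.succ_le_succ hdn)
          · intro i _ _; positivity
      _ = (δ + q) ^ n := (add_pow δ q n).symm
      _ = 1 := by simp [hqdef]
  -- conclude
  have hB : A = ((2 : ℝ) ^ ((n : ℝ) * binent δ))⁻¹ := by
    rw [hAdef, Real.rpow_neg (by norm_num)]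
  have hBpos : (0:ℝ) < (2 : ℝ) ^ ((n : ℝ) * binent δ) := Real.rpow_pos_of_pos (by norm_num) _
  rw [hB] at hsum
  calc ((∑ i ∈ Finset.range (d + 1), n.choose i : ℕ) : ℝ)
      = ((∑ i ∈ Finset.range (d + 1), n.choose i : ℕ) : ℝ)
          * ((2 : ℝ) ^ ((n : ℝ) * binent δ))⁻¹ * ((2 : ℝ) ^ ((n : ℝ) * binent δ)) := by
        field_simp
    _ ≤ 1 * ((2 : ℝ) ^ ((n : ℝ) * binent δ)) := mul_le_mul_of_nonneg_right hsum (le_of_lt hBpos)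
    _ = _ := one_mul _
lemma gv_bound (m L d w : ℕ) :
    (Finset.univ.filter fun x : Fin (m * L) → Bool =>
        ∀ i : Fin m, w ≤ wt (subblock m L x i)).card
      ≤ maxSECC m L d w * ∑ i ∈ Finset.range (d + 1), (m * L).choose i := by
  classical
  set K := {k | ∃ C : Finset (Fin (m * L) → Bool), isCode (SECCspace m L w) d C ∧ C.card = k}
    with hK
  have hne : K.Nonempty := ⟨0, ∅, ⟨by simp, by simp⟩, rfl⟩
  have hbdd : BddAbove K := by
    refine ⟨Fintype.card (Fin (m * L) → Bool), ?_⟩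
    rintro k ⟨C, _, rfl⟩
    exact Finset.card_le_univ C
  obtain ⟨C, hC, hcard⟩ := Nat.sSup_mem hne hbdd
  have hmax : ∀ C' : Finset (Fin (m * L) → Bool),
      isCode (SECCspace m L w) d C' → C'.card ≤ maxSECC m L d w :=
    fun C' h => le_csSup hbdd ⟨C', h, rfl⟩
  have hMeq : maxSECC m L d w = C.card := hcard.symm
  -- covering
  have hcov : (Finset.univ.filter fun x : Fin (m * L) → Bool =>
        ∀ i : Fin m, w ≤ wt (subblock m L x i))
      ⊆ C.biUnion fun c => Finset.univ.filter fun y => hammingDist c y ≤ d := by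
    intro x hx
    rw [Finset.mem_filter] at hx
    have hxS : x ∈ SECCspace m L w := hx.2
    rw [Finset.mem_biUnion]
    by_contra hcon
    push_neg at hcon
    simp only [Finset.mem_filter, Finset.mem_univ, true_and, not_le] at hcon
    have hxC : x ∉ C := by
      intro h
      have := hcon x h
      simp [hammingDist_self] at this
    have hcode : isCode (SECCspace m L w) d (insert x C) := by
      constructor
      · intro y hy
        rw [Finset.coe_insert, Set.mem_insert_iff] at hy
        rcases hy with rfl | hy
        · exact hxS
        · exact hC.1 hy
      · intro a ha b hb hab
        rw [Finset.mem_insert] at ha hb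
        rcases ha with rfl | ha
        · rcases hb with rfl | hb
          · exact absurd rfl hab
          · rw [hammingDist_comm]
            exact le_of_lt (hcon b hb)
        · rcases hb with rfl | hb
          · exact le_of_lt (hcon a ha)
          · exact hC.2 a ha b hb hab
    have := hmax _ hcode
    rw [Finset.card_insert_of_notMem hxC, hMeq] at this
    omega
  calc (Finset.univ.filter fun x : Fin (m * L) → Bool =>
        ∀ i : Fin m, w ≤ wt (subblock m L x i)).card
      ≤ (C.biUnion fun c => Finset.univ.filter fun y => hammingDist c y ≤ d).card :=
        Finset.card_le_card hcov
    _ ≤ ∑ c ∈ C, (Finset.univ.filter fun y => hammingDist c y ≤ d).card :=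
        Finset.card_biUnion_le
    _ ≤ ∑ _c ∈ C, ∑ i ∈ Finset.range (d + 1), (m * L).choose i :=
        Finset.sum_le_sum fun c _ => card_ball_le c d
    _ = C.card * ∑ i ∈ Finset.range (d + 1), (m * L).choose i := by
        rw [Finset.sum_const, smul_eq_mul]
    _ = _ := by rw [hMeq]

lemma maxSECC_le (m L d w : ℕ) : maxSECC m L d w ≤ 2 ^ (m * L) := by
  apply csSup_le
  · exact ⟨0, ∅, ⟨by simp, by simp⟩, rfl⟩
  · rintro k ⟨C, _, rfl⟩
    calc C.card ≤ Fintype.card (Fin (m * L) → Bool) := Finset.card_le_univ C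
      _ = 2 ^ (m * L) := by rw [Fintype.card_fun]; simp

lemma per_m (L w : ℕ) (hL : 0 < L) (hw : w ≤ L)
    (δ : ℝ) (hδ0 : 0 < δ) (hδ : δ ≤ 1 / 2) (m : ℕ) (hm : 1 ≤ m) :
    (1 / (L : ℝ)) * Real.logb 2 ((∑ j ∈ Finset.Icc w L, L.choose j : ℕ)) - binent δ
      ≤ Real.logb 2 (maxSECC m L ⌊(m : ℝ) * L * δ⌋₊ w) / ((m : ℝ) * L) := by
  classical
  set d := ⌊(m : ℝ) * L * δ⌋₊ with hd
  set S := ∑ j ∈ Finset.Icc w L, L.choose j with hS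
  set V := ∑ i ∈ Finset.range (d + 1), (m * L).choose i with hV
  set M := maxSECC m L d w with hM
  have hS1 : 1 ≤ S := by
    have hmem : L ∈ Finset.Icc w L := Finset.mem_Icc.mpr ⟨hw, le_refl L⟩
    have := Finset.single_le_sum (f := fun j => L.choose j)
      (fun j _ => Nat.zero_le _) hmem
    simpa [Nat.choose_self] using this
  have hV1 : 1 ≤ V := by
    have hmem : 0 ∈ Finset.range (d + 1) := Finset.mem_range.mpr (Nat.succ_pos d)
    have := Finset.single_le_sum (f := fun i => (m * L).choose i)
      (fun i _ => Nat.zero_le _) hmem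
    simpa using this
  have hSN : S ^ m ≤ M * V := by
    have h1 := card_space m L w hL
    rw [card_wt_ge L w] at h1
    have h2 := gv_bound m L d w
    rw [h1] at h2
    exact h2
  have hM1 : 1 ≤ M := by
    rcases Nat.eq_zero_or_pos M with h0 | h0
    · rw [h0, Nat.zero_mul] at hSN
      have hp : 1 ≤ S ^ m := Nat.one_le_pow _ _ hS1
      omega
    · exact h0
  -- real facts
  have hmL : (0 : ℝ) < (m : ℝ) * L := by positivity
  have hdle : (d : ℝ) ≤ ((m * L : ℕ) : ℝ) * δ := by
    push_cast
    rw [hd]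
    exact Nat.floor_le (by positivity)
  have hVb : (V : ℝ) ≤ (2 : ℝ) ^ (((m * L : ℕ) : ℝ) * binent δ) :=
    entropy_bound (m * L) d δ hδ0 hδ hdle
  have hlogV : Real.logb 2 (V : ℝ) ≤ ((m * L : ℕ) : ℝ) * binent δ := by
    calc Real.logb 2 (V : ℝ)
        ≤ Real.logb 2 ((2 : ℝ) ^ (((m * L : ℕ) : ℝ) * binent δ)) := by
          rw [Real.logb_le_logb (by norm_num) (by exact_mod_cast hV1)
            (Real.rpow_pos_of_pos (by norm_num) _)]
          exact hVb
      _ = _ := Real.logb_rpow (by norm_num) (by norm_num)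
  have hlogN : (m : ℝ) * Real.logb 2 (S : ℝ) ≤ Real.logb 2 (M : ℝ) + Real.logb 2 (V : ℝ) := by
    have hcast : ((S ^ m : ℕ) : ℝ) ≤ ((M * V : ℕ) : ℝ) := by exact_mod_cast hSN
    push_cast at hcast
    calc (m : ℝ) * Real.logb 2 (S : ℝ) = Real.logb 2 ((S : ℝ) ^ m) :=
        (Real.logb_pow 2 (S : ℝ) m).symm
      _ ≤ Real.logb 2 ((M : ℝ) * (V : ℝ)) := by
          have hM0 : (0:ℝ) < (M : ℝ) := by exact_mod_cast hM1
          have hV0 : (0:ℝ) < (V : ℝ) := by exact_mod_cast hV1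
          rw [Real.logb_le_logb (by norm_num) (by positivity) (by positivity)]
          exact hcast
      _ = Real.logb 2 (M : ℝ) + Real.logb 2 (V : ℝ) := by
          apply Real.logb_mul
          · exact_mod_cast Nat.one_le_iff_ne_zero.mp hM1
          · exact_mod_cast Nat.one_le_iff_ne_zero.mp hV1
  have hlogM : (m : ℝ) * Real.logb 2 (S : ℝ) - ((m * L : ℕ) : ℝ) * binent δ
      ≤ Real.logb 2 (M : ℝ) := by linarith
  rw [le_div_iff₀ hmL]
  have hLne : (L : ℝ) ≠ 0 := by positivity
  calc (1 / (L : ℝ) * Real.logb 2 (S : ℝ) - binent δ) * ((m : ℝ) * L)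
      = (m : ℝ) * Real.logb 2 (S : ℝ) - ((m : ℝ) * L) * binent δ := by
        field_simp
    _ = (m : ℝ) * Real.logb 2 (S : ℝ) - ((m * L : ℕ) : ℝ) * binent δ := by push_cast; ring
    _ ≤ Real.logb 2 (M : ℝ) := hlogM

/-- Asymptotic Gilbert–Varshamov bound for SECCs:
`σ(L,δ,w/L) ≥ (1/L)·log(Σ_{j=w}^{L} C(L,j)) − h(δ)`. -/
theorem stmt_14 (L w : ℕ) (hL : 0 < L) (hw : w ≤ L)
    (δ : ℝ) (hδ0 : 0 < δ) (hδ : δ ≤ 1 / 2) :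
    (1 / (L : ℝ)) * Real.logb 2 ((∑ j ∈ Finset.Icc w L, L.choose j : ℕ)) - binent δ
      ≤ sigmaRate L δ w := by
  have hbdd : Filter.IsBoundedUnder (· ≤ ·) Filter.atTop
      (fun m : ℕ => Real.logb 2 (maxSECC m L ⌊(m : ℝ) * L * δ⌋₊ w) / ((m : ℝ) * L)) := by
    refine ⟨1, ?_⟩
    rw [Filter.eventually_map]
    filter_upwards [Filter.eventually_ge_atTop 1] with m hm
    have hmL : (0 : ℝ) < (m : ℝ) * L := by
      have : (0:ℝ) < (m:ℝ) := by exact_mod_cast hm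
      have : (0:ℝ) < (L:ℝ) := by exact_mod_cast hL
      positivity
    have hlog : Real.logb 2 (maxSECC m L ⌊(m : ℝ) * L * δ⌋₊ w) ≤ (m : ℝ) * L := by
      set M := maxSECC m L ⌊(m : ℝ) * L * δ⌋₊ w with hM
      rcases Nat.eq_zero_or_pos M with h0 | h0
      · rw [h0]; simp; positivity
      · calc Real.logb 2 (M : ℝ) ≤ Real.logb 2 ((2 : ℝ) ^ (m * L)) := by
              rw [Real.logb_le_logb (by norm_num) (by exact_mod_cast h0) (by positivity)]
              have hb : (M : ℝ) ≤ ((2 ^ (m * L) : ℕ) : ℝ) :=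
                Nat.cast_le.mpr (maxSECC_le m L ⌊(m : ℝ) * L * δ⌋₊ w)
              push_cast at hb
              exact hb
          _ = ((m * L : ℕ) : ℝ) := by
              rw [Real.logb_pow, Real.logb_self_eq_one (by norm_num)]; ring
          _ = (m : ℝ) * L := by push_cast; ring
    rw [div_le_one hmL]
    exact hlog
  apply Filter.le_limsup_of_frequently_le _ hbdd
  apply Filter.Eventually.frequently
  filter_upwards [Filter.eventually_ge_atTop 1] with m hm
  exact per_m L w hL hw δ hδ0 hδ m hm
end

section
/- Let L be a positive integer and 0 ≤ w_s ≤ L an integer. Let x be a binary word of length L whose weight is at least w_s. Then the number of binary words y of length L with weight at least w_s and Hamming distance d(x,y) ∈ {1,2} is at least (L−w_s)(w_s+1). -/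
open Finset Filter

def flipW {L : ℕ} (x : Fin L → Bool) (A B : Finset (Fin L)) : Fin L → Bool :=
  fun i => if i ∈ A then true else if i ∈ B then false else x i

lemma flip_ones {L : ℕ} (x : Fin L → Bool) (A B : Finset (Fin L))
    (hA : ∀ i ∈ A, x i = false) (hB : ∀ i ∈ B, x i = true) :
    (Finset.univ.filter fun i => flipW x A B i = true)
      = A ∪ ((Finset.univ.filter fun i => x i = true) \ B) := by
  ext i
  simp only [mem_filter, mem_univ, true_and, mem_union, mem_sdiff, flipW]
  by_cases hiA : i ∈ A
  · simp [hiA]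
  · by_cases hiB : i ∈ B
    · have h1 := hB i hiB
      simp [hiA, hiB, h1]
    · by_cases hx1 : x i = true
      · simp [hiA, hiB, hx1]
      · simp [hiA, hiB, hx1]

lemma flip_wt {L : ℕ} (x : Fin L → Bool) (A B : Finset (Fin L))
    (hA : ∀ i ∈ A, x i = false) (hB : ∀ i ∈ B, x i = true) :
    wt (flipW x A B) + B.card = wt x + A.card := by
  have hBsub : B ⊆ (Finset.univ.filter fun i => x i = true) := by
    intro i hi; simp [hB i hi]
  have hdisj : Disjoint A ((Finset.univ.filter fun i => x i = true) \ B) := by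
    rw [Finset.disjoint_left]
    intro i hi hi2
    simp only [Finset.mem_sdiff, Finset.mem_filter] at hi2
    simp [hA i hi] at hi2
  unfold wt
  rw [flip_ones x A B hA hB, Finset.card_union_of_disjoint hdisj,
    Finset.card_sdiff_of_subset hBsub]
  have := Finset.card_le_card hBsub
  omega

lemma flip_dist {L : ℕ} (x : Fin L → Bool) (A B : Finset (Fin L))
    (hA : ∀ i ∈ A, x i = false) (hB : ∀ i ∈ B, x i = true) :
    hammingDist x (flipW x A B) = A.card + B.card := by
  have hdisj : Disjoint A B := by
    rw [Finset.disjoint_left]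
    intro i hi hi2
    have := hA i hi; have := hB i hi2; simp_all
  have : (Finset.univ.filter fun i => x i ≠ flipW x A B i) = A ∪ B := by
    ext i
    simp only [mem_filter, mem_univ, true_and, mem_union, flipW]
    by_cases hiA : i ∈ A
    · simp [hiA, hA i hiA]
    · by_cases hiB : i ∈ B
      · simp [hiA, hiB, hB i hiB]
      · simp [hiA, hiB]
  rw [hammingDist, this, Finset.card_union_of_disjoint hdisj]

lemma flip_recoverA {L : ℕ} (x : Fin L → Bool) (A B : Finset (Fin L))
    (hA : ∀ i ∈ A, x i = false) (hB : ∀ i ∈ B, x i = true) :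
    (Finset.univ.filter fun i => x i = false ∧ flipW x A B i = true) = A := by
  ext i
  rw [Finset.mem_filter]
  simp only [mem_filter, mem_univ, true_and, flipW]
  constructor
  · rintro ⟨hx0, h⟩
    by_cases hiA : i ∈ A
    · exact hiA
    · by_cases hiB : i ∈ B <;> simp [hiA, hiB, hx0] at h
  · intro hiA; simp [hA i hiA, hiA]

lemma flip_recoverB {L : ℕ} (x : Fin L → Bool) (A B : Finset (Fin L))
    (hA : ∀ i ∈ A, x i = false) (hB : ∀ i ∈ B, x i = true) :
    (Finset.univ.filter fun i => x i = true ∧ flipW x A B i = false) = B := by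
  ext i
  rw [Finset.mem_filter]
  simp only [mem_filter, mem_univ, true_and, flipW]
  constructor
  · rintro ⟨hx1, h⟩
    by_cases hiA : i ∈ A
    · simp [hiA] at h
    · by_cases hiB : i ∈ B
      · exact hiB
      · simp [hiA, hiB, hx1] at h
  · intro hiB
    have hiA : i ∉ A := fun hiA => by have := hA i hiA; have := hB i hiB; simp_all
    simp [hB i hiB, hiA, hiB]

lemma flip_inj {L : ℕ} (x : Fin L → Bool) {A B A' B' : Finset (Fin L)}
    (hA : ∀ i ∈ A, x i = false) (hB : ∀ i ∈ B, x i = true)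
    (hA' : ∀ i ∈ A', x i = false) (hB' : ∀ i ∈ B', x i = true)
    (h : flipW x A B = flipW x A' B') : A = A' ∧ B = B' := by
  constructor
  · rw [← flip_recoverA x A B hA hB, ← flip_recoverA x A' B' hA' hB', h]
  · rw [← flip_recoverB x A B hA hB, ← flip_recoverB x A' B' hA' hB', h]

lemma two_mul_choose_two (n : ℕ) : 2 * n.choose 2 = n * (n - 1) := by
  induction n with
  | zero => simp
  | succ m ih =>
    rw [Nat.choose_succ_succ, Nat.mul_add, ih, Nat.choose_one_right]
    cases m with
    | zero => simp
    | succ k => simp only [Nat.succ_sub_one]; ring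


set_option maxHeartbeats 1000000 in
/-- If `x` has length `L` and weight at least `w`, then at least `(L-w)(w+1)` words
of length `L` and weight at least `w` lie at Hamming distance `1` or `2` from `x`. -/
theorem stmt_15 (L w : ℕ) (hL : 0 < L) (hw : w ≤ L)
    (x : Fin L → Bool) (hx : w ≤ wt x) :
    (L - w) * (w + 1) ≤
      {y : Fin L → Bool |
        w ≤ wt y ∧ (hammingDist x y = 1 ∨ hammingDist x y = 2)}.ncard := by
  classical
  set W := wt x with hWdef
  set O : Finset (Fin L) := Finset.univ.filter (fun i => x i = true) with hOdef
  set Z : Finset (Fin L) := Finset.univ.filter (fun i => x i = false) with hZdef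
  have hOc : O.card = W := rfl
  have hWL : W ≤ L := by
    rw [← hOc]; simpa using Finset.card_le_card (Finset.subset_univ O)
  have hZc : Z.card = L - W := by
    have hZO : Z = Oᶜ := by ext i; simp [hZdef, hOdef]
    rw [hZO, Finset.card_compl, hOc]; simp
  set T : Finset (Fin L → Bool) :=
    Finset.univ.filter
      (fun y => w ≤ wt y ∧ (hammingDist x y = 1 ∨ hammingDist x y = 2)) with hT
  have hsetT : {y : Fin L → Bool |
      w ≤ wt y ∧ (hammingDist x y = 1 ∨ hammingDist x y = 2)} = ↑T := by
    ext y; simp [hT]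
  rw [hsetT, Set.ncard_coe_finset]
  -- the four families of flip-pairs
  set D1 : Finset (Finset (Fin L) × Finset (Fin L)) :=
    Z.image (fun i => ({i}, (∅ : Finset (Fin L)))) with hD1
  set D2 : Finset (Finset (Fin L) × Finset (Fin L)) :=
    (Z ×ˢ O).image (fun p => ({p.1}, {p.2})) with hD2
  set D3 : Finset (Finset (Fin L) × Finset (Fin L)) :=
    if w < W then O.image (fun j => ((∅ : Finset (Fin L)), {j})) else ∅ with hD3
  set D4 : Finset (Finset (Fin L) × Finset (Fin L)) :=
    if w + 1 < W then (O.powersetCard 2).image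
      (fun s => ((∅ : Finset (Fin L)), s)) else ∅ with hD4
  set D : Finset (Finset (Fin L) × Finset (Fin L)) := D1 ∪ D2 ∪ D3 ∪ D4 with hD
  -- basic facts about elements of Z and O
  have hZmem : ∀ i ∈ Z, x i = false := fun i hi => by
    simpa [hZdef] using hi
  have hOmem : ∀ i ∈ O, x i = true := fun i hi => by
    simpa [hOdef] using hi
  -- shape lemmas
  have hS1 : ∀ p ∈ D1, p.1.card = 1 ∧ p.2.card = 0 := by
    intro p hp
    simp only [hD1, Finset.mem_image] at hp
    obtain ⟨i, -, rfl⟩ := hp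
    simp
  have hS2 : ∀ p ∈ D2, p.1.card = 1 ∧ p.2.card = 1 := by
    intro p hp
    simp only [hD2, Finset.mem_image] at hp
    obtain ⟨q, -, rfl⟩ := hp
    simp
  have hS3 : ∀ p ∈ D3, p.1.card = 0 ∧ p.2.card = 1 := by
    intro p hp
    by_cases hc : w < W
    · simp only [hD3, if_pos hc, Finset.mem_image] at hp
      obtain ⟨j, -, rfl⟩ := hp
      simp
    · simp [hD3, if_neg hc] at hp
  have hS4 : ∀ p ∈ D4, p.1.card = 0 ∧ p.2.card = 2 := by
    intro p hp
    by_cases hc : w + 1 < W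
    · simp only [hD4, if_pos hc, Finset.mem_image] at hp
      obtain ⟨s, hs, rfl⟩ := hp
      simp only [Finset.mem_powersetCard] at hs
      simp [hs.2]
    · simp [hD4, if_neg hc] at hp
  -- validity: A ⊆ Z, B ⊆ O, weight condition
  have hval : ∀ p ∈ D, (∀ i ∈ p.1, x i = false) ∧ (∀ i ∈ p.2, x i = true) ∧
      flipW x p.1 p.2 ∈ T := by
    intro p hp
    simp only [hD, Finset.mem_union] at hp
    have key : ∀ A B : Finset (Fin L), (∀ i ∈ A, x i = false) →
        (∀ i ∈ B, x i = true) → W + A.card = wt (flipW x A B) + B.card →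
        w + B.card ≤ W + A.card → (A.card + B.card = 1 ∨ A.card + B.card = 2) →
        flipW x A B ∈ T := by
      intro A B hA hB hwt hge hd
      simp only [hT, Finset.mem_filter, Finset.mem_univ, true_and]
      refine ⟨by omega, ?_⟩
      rw [flip_dist x A B hA hB]
      exact hd
    rcases hp with ((hp | hp) | hp) | hp
    · simp only [hD1, Finset.mem_image] at hp
      obtain ⟨i, hi, rfl⟩ := hp
      have hA : ∀ j ∈ ({i} : Finset (Fin L)), x j = false := by
        intro j hj; rw [Finset.mem_singleton] at hj; subst hj; exact hZmem _ hi
      have hB : ∀ j ∈ (∅ : Finset (Fin L)), x j = true := by simp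
      exact ⟨hA, hB, key _ _ hA hB
        ((flip_wt x _ _ hA hB).symm) (by simp; omega) (by simp)⟩
    · simp only [hD2, Finset.mem_product, Finset.mem_image] at hp
      obtain ⟨q, hq, rfl⟩ := hp
      have hA : ∀ j ∈ ({q.1} : Finset (Fin L)), x j = false := by
        intro j hj; rw [Finset.mem_singleton] at hj; subst hj; exact hZmem _ hq.1
      have hB : ∀ j ∈ ({q.2} : Finset (Fin L)), x j = true := by
        intro j hj; rw [Finset.mem_singleton] at hj; subst hj; exact hOmem _ hq.2
      exact ⟨hA, hB, key _ _ hA hB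
        ((flip_wt x _ _ hA hB).symm) (by simp; omega) (by simp)⟩
    · by_cases hc : w < W
      swap
      · simp [hD3, if_neg hc] at hp
      simp only [hD3, if_pos hc, Finset.mem_image] at hp
      obtain ⟨j, hj, rfl⟩ := hp
      have hA : ∀ i ∈ (∅ : Finset (Fin L)), x i = false := by simp
      have hB : ∀ i ∈ ({j} : Finset (Fin L)), x i = true := by
        intro i hi; rw [Finset.mem_singleton] at hi; subst hi; exact hOmem _ hj
      exact ⟨hA, hB, key _ _ hA hB
        ((flip_wt x _ _ hA hB).symm) (by simp; omega) (by simp)⟩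
    · by_cases hc : w + 1 < W
      swap
      · simp [hD4, if_neg hc] at hp
      simp only [hD4, if_pos hc, Finset.mem_image] at hp
      obtain ⟨s, hs, rfl⟩ := hp
      rw [Finset.mem_powersetCard] at hs
      have hA : ∀ i ∈ (∅ : Finset (Fin L)), x i = false := by simp
      have hB : ∀ i ∈ s, x i = true := fun i hi => hOmem _ (hs.1 hi)
      exact ⟨hA, hB, key _ _ hA hB
        ((flip_wt x _ _ hA hB).symm) (by simp [hs.2]; omega) (by simp [hs.2])⟩
  -- injectivity of the flip map on D
  have hinj : Set.InjOn (fun p : Finset (Fin L) × Finset (Fin L) =>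
      flipW x p.1 p.2) ↑D := by
    intro p hp q hq h
    have hp' := hval p (by exact_mod_cast hp)
    have hq' := hval q (by exact_mod_cast hq)
    have := flip_inj x hp'.1 hp'.2.1 hq'.1 hq'.2.1 h
    exact Prod.ext this.1 this.2
  have himg : D.image (fun p => flipW x p.1 p.2) ⊆ T := by
    intro y hy
    simp only [Finset.mem_image] at hy
    obtain ⟨p, hp, rfl⟩ := hy
    exact (hval p hp).2.2
  have hcard : D.card ≤ T.card := by
    rw [← Finset.card_image_of_injOn hinj]
    exact Finset.card_le_card himg
  -- disjointness and cardinalities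
  have hdisj12 : Disjoint D1 D2 := Finset.disjoint_left.2 fun {p} hp hq => by
    have := hS1 _ hp; have := hS2 _ hq; omega
  have hdisj13 : Disjoint (D1 ∪ D2) D3 := Finset.disjoint_left.2 fun {p} hp hq => by
    have h3 := hS3 _ hq
    rcases Finset.mem_union.1 hp with h | h
    · have := hS1 _ h; omega
    · have := hS2 _ h; omega
  have hdisj14 : Disjoint (D1 ∪ D2 ∪ D3) D4 := Finset.disjoint_left.2
    fun {p} hp hq => by
    have h4 := hS4 _ hq
    rcases Finset.mem_union.1 hp with h | h
    · rcases Finset.mem_union.1 h with h | h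
      · have := hS1 _ h; omega
      · have := hS2 _ h; omega
    · have := hS3 _ h; omega
  have hc1 : D1.card = L - W := by
    rw [hD1, Finset.card_image_of_injective _ (fun a b h => by
      simpa using congrArg Prod.fst h), hZc]
  have hc2 : D2.card = (L - W) * W := by
    rw [hD2, Finset.card_image_of_injective _ (fun a b h => by
      have h1 := congrArg Prod.fst h
      have h2 := congrArg Prod.snd h
      simp only at h1 h2
      exact Prod.ext (Finset.singleton_injective h1)
        (Finset.singleton_injective h2)), Finset.card_product, hZc, hOc]
  have hc3 : D3.card = if w < W then W else 0 := by
    by_cases hc : w < W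
    · rw [hD3, if_pos hc, if_pos hc, Finset.card_image_of_injective _
        (fun a b h => by simpa using congrArg Prod.snd h), hOc]
    · rw [hD3, if_neg hc, if_neg hc, Finset.card_empty]
  have hc4 : D4.card = if w + 1 < W then W.choose 2 else 0 := by
    by_cases hc : w + 1 < W
    · rw [hD4, if_pos hc, if_pos hc, Finset.card_image_of_injective _
        (fun a b h => by simpa using congrArg Prod.snd h),
        Finset.card_powersetCard, hOc]
    · rw [hD4, if_neg hc, if_neg hc, Finset.card_empty]
  have hDcard : D.card = (L - W) + (L - W) * W + (if w < W then W else 0)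
      + (if w + 1 < W then W.choose 2 else 0) := by
    rw [hD, Finset.card_union_of_disjoint hdisj14,
      Finset.card_union_of_disjoint hdisj13,
      Finset.card_union_of_disjoint hdisj12, hc1, hc2, hc3, hc4]
  -- final arithmetic
  refine le_trans ?_ hcard
  rw [hDcard]
  obtain ⟨z, hz⟩ : ∃ z, L = W + z := ⟨L - W, by omega⟩
  obtain ⟨a, ha⟩ : ∃ a, W = w + a := ⟨W - w, by omega⟩
  have hLw : L - w = a + z := by omega
  have hWW : L - W = z := by omega
  rw [hLw, hWW]
  rcases Nat.lt_or_ge a 1 with h1 | h1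
  · have ha0 : a = 0 := by omega
    subst ha0
    rw [if_neg (by omega), if_neg (by omega), ha]
    nlinarith
  rcases Nat.lt_or_ge a 2 with h2 | h2
  · have ha1 : a = 1 := by omega
    subst ha1
    rw [if_pos (by omega), if_neg (by omega), ha]
    nlinarith
  · rw [if_pos (by omega), if_pos (by omega)]
    obtain ⟨b, hb⟩ : ∃ b, a = b + 2 := ⟨a - 2, by omega⟩
    have hch : 2 * W.choose 2 = W * (w + b + 1) := by
      rw [two_mul_choose_two W]
      congr 1
      omega
    have key2 : 2 * ((a + z) * (w + 1))
        ≤ 2 * (z + z * W + W + W.choose 2) := by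
      have e : 2 * (z + z * W + W + W.choose 2)
          = 2 * z + 2 * (z * W) + 2 * W + W * (w + b + 1) := by
        rw [Nat.mul_add, Nat.mul_add, Nat.mul_add, hch]
      rw [e, ha, hb]
      nlinarith
    exact Nat.le_of_mul_le_mul_left key2 (by norm_num)
end

section
/- Let L be a positive integer, 1 ≤ w_s ≤ L−1 an integer, and δ a real number with 0 < δ < min{δ*, 4/L}, where δ* = 2(w_s/L)(1−w_s/L). Then σ(L,δ,w_s/L) ≤ (1/L)·log(Σ_{j=w_s}^{L} C(L,j)) − (1/L)·h(Lδ/4) − (δ/4)·log((L−w_s)(w_s+1)), where C(a,b) denotes the binomial coefficient (asymptotic sphere-packing bound for SECCs). -/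
open Finset Filter

namespace SECCAux

variable {m L : ℕ}

def blkOf (hL : 0 < L) (p : Fin (m * L)) : Fin m :=
  ⟨p.val / L, by rw [Nat.div_lt_iff_lt_mul hL]; exact p.isLt⟩

def posOf (hL : 0 < L) (p : Fin (m * L)) : Fin L :=
  ⟨p.val % L, Nat.mod_lt _ hL⟩

lemma subIdx_blkOf (hL : 0 < L) (p : Fin (m * L)) :
    subIdx m L (blkOf hL p) (posOf hL p) = p := by
  apply Fin.ext
  simp only [subIdx, blkOf, posOf]
  rw [Nat.mul_comm, Nat.div_add_mod]

lemma blkOf_subIdx (hL : 0 < L) (i : Fin m) (j : Fin L) :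
    blkOf hL (subIdx m L i j) = i := by
  apply Fin.ext
  simp only [subIdx, blkOf]
  rw [Nat.mul_comm, Nat.mul_add_div hL, Nat.div_eq_of_lt j.isLt, Nat.add_zero]

lemma posOf_subIdx (hL : 0 < L) (i : Fin m) (j : Fin L) :
    posOf hL (subIdx m L i j) = j := by
  apply Fin.ext
  simp only [subIdx, posOf]
  rw [Nat.mul_comm, Nat.mul_add_mod, Nat.mod_eq_of_lt j.isLt]

/-- Assemble a word from its subblocks. -/
def asm (hL : 0 < L) (c : Fin m → Fin L → Bool) : Fin (m * L) → Bool :=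
  fun p => c (blkOf hL p) (posOf hL p)

lemma subblock_asm (hL : 0 < L) (c : Fin m → Fin L → Bool) (i : Fin m) :
    subblock m L (asm hL c) i = c i := by
  funext j
  simp only [subblock, asm, blkOf_subIdx, posOf_subIdx]

lemma asm_injective (hL : 0 < L) : Function.Injective (asm (m := m) hL) := by
  intro c c' h
  funext i j
  have := congrFun h (subIdx m L i j)
  simpa only [asm, blkOf_subIdx, posOf_subIdx] using this

lemma asm_subblock (hL : 0 < L) (x : Fin (m * L) → Bool) :
    asm hL (fun i => subblock m L x i) = x := by
  funext p
  simp only [asm, subblock, subIdx_blkOf]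

lemma hammingDist_eq_sum (hL : 0 < L) (x y : Fin (m * L) → Bool) :
    hammingDist x y = ∑ i : Fin m, hammingDist (subblock m L x i) (subblock m L y i) := by
  rw [hammingDist, Finset.card_eq_sum_card_fiberwise
    (f := blkOf hL) (t := Finset.univ) (fun p _ => Finset.mem_univ _)]
  refine Finset.sum_congr rfl fun i _ => ?_
  rw [hammingDist]
  apply Finset.card_nbij' (i := fun p => posOf hL p) (j := fun j => subIdx m L i j)
  · intro p hp
    simp only [Finset.mem_coe, Finset.mem_filter, Finset.mem_univ, true_and] at hp ⊢
    obtain ⟨h1, h2⟩ := hp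
    simpa only [subblock, ← h2, subIdx_blkOf] using h1
  · intro j hj
    simp only [Finset.mem_coe, Finset.mem_filter, Finset.mem_univ, true_and] at hj ⊢
    exact ⟨hj, blkOf_subIdx hL i j⟩
  · intro p hp
    simp only [Finset.mem_coe, Finset.mem_filter, Finset.mem_univ, true_and] at hp
    rw [← hp.2]; exact subIdx_blkOf hL p
  · intro j hj
    exact posOf_subIdx hL i j

end SECCAux
namespace SECCAux

variable {n : ℕ}

def flip (b : Fin n → Bool) (s : Finset (Fin n)) : Fin n → Bool :=
  fun i => if i ∈ s then !(b i) else b i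

def ones (b : Fin n → Bool) : Finset (Fin n) := Finset.univ.filter (fun i => b i = true)

lemma wt_eq_card_ones (b : Fin n → Bool) : wt b = (ones b).card := rfl

lemma hammingDist_flip (b : Fin n → Bool) (s : Finset (Fin n)) :
    hammingDist b (flip b s) = s.card := by
  rw [hammingDist]
  congr 1
  ext i
  simp only [Finset.mem_filter, Finset.mem_univ, true_and, flip]
  by_cases h : i ∈ s <;> simp [h]

lemma flip_ne_iff (b : Fin n → Bool) (s : Finset (Fin n)) (i : Fin n) :
    flip b s i ≠ b i ↔ i ∈ s := by
  simp only [flip]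
  by_cases h : i ∈ s <;> simp [h]

lemma flip_injective (b : Fin n → Bool) : Function.Injective (flip b) := by
  intro s t h
  ext i
  rw [← flip_ne_iff b s i, ← flip_ne_iff b t i, h]

lemma ones_flip (b : Fin n → Bool) (s : Finset (Fin n)) :
    ones (flip b s) = (ones b \ s) ∪ (s \ ones b) := by
  ext i
  simp only [ones, flip, Finset.mem_filter, Finset.mem_univ, true_and, Finset.mem_union,
    Finset.mem_sdiff]
  by_cases h : i ∈ s <;> cases hb : b i <;> simp [h, hb]

lemma wt_flip (b : Fin n → Bool) (s : Finset (Fin n)) :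
    wt (flip b s) = (ones b \ s).card + (s \ ones b).card := by
  rw [wt_eq_card_ones, ones_flip, Finset.card_union_of_disjoint]
  rw [Finset.disjoint_left]
  intro i h1 h2
  exact (Finset.mem_sdiff.mp h1).2 (Finset.mem_sdiff.mp h2).1

lemma two_mul_choose_two (k : ℕ) : 2 * k.choose 2 = k * (k - 1) := by
  cases k with
  | zero => rfl
  | succ k =>
    rw [Nat.choose_two_right, Nat.succ_sub_one, Nat.mul_comm (k + 1) k]
    exact Nat.mul_div_cancel' ((Nat.even_mul_succ_self k).two_dvd)

lemma arith1 (w a : ℕ) (hw : 1 ≤ w) (ha : 1 ≤ a) :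
    a * (w + 1) + (w + w.choose 2) ≤ (w + a) + (w + a).choose 2 := by
  obtain ⟨w', rfl⟩ := Nat.exists_eq_add_of_le hw
  obtain ⟨a', rfl⟩ := Nat.exists_eq_add_of_le ha
  rw [show 1 + w' + (1 + a') = w' + a' + 2 by ring]
  have h1 := two_mul_choose_two (w' + a' + 2)
  rw [show w' + a' + 2 - 1 = w' + a' + 1 by omega] at h1
  have h2 := two_mul_choose_two (1 + w')
  rw [show 1 + w' - 1 = w' by omega] at h2
  nlinarith [sq_nonneg a', h1, h2]

lemma arith2 (w a : ℕ) (hw : 1 ≤ w) (ha : 1 ≤ a) :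
    a * (w + 1) + (w + 1).choose 2 ≤ (w + a) + (w + a).choose 2 := by
  obtain ⟨w', rfl⟩ := Nat.exists_eq_add_of_le hw
  obtain ⟨a', rfl⟩ := Nat.exists_eq_add_of_le ha
  rw [show 1 + w' + (1 + a') = w' + a' + 2 by ring, show 1 + w' + 1 = w' + 2 by ring]
  have h1 := two_mul_choose_two (w' + a' + 2)
  rw [show w' + a' + 2 - 1 = w' + a' + 1 by omega] at h1
  have h2 := two_mul_choose_two (w' + 2)
  rw [show w' + 2 - 1 = w' + 1 by omega] at h2
  nlinarith [sq_nonneg a', h1, h2]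

lemma arith3 (w a : ℕ) (hw : 1 ≤ w) (ha : 1 ≤ a) :
    a * (w + 1) ≤ (w + a) + (w + a).choose 2 := by
  obtain ⟨w', rfl⟩ := Nat.exists_eq_add_of_le hw
  obtain ⟨a', rfl⟩ := Nat.exists_eq_add_of_le ha
  rw [show 1 + w' + (1 + a') = w' + a' + 2 by ring]
  have h1 := two_mul_choose_two (w' + a' + 2)
  rw [show w' + a' + 2 - 1 = w' + a' + 1 by omega] at h1
  nlinarith [h1]

/-- The per-block neighbour bound. -/
lemma neighbor_card_ge {L w : ℕ} (hw1 : 1 ≤ w) (hw2 : w + 1 ≤ L) (b : Fin L → Bool)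
    (hb : w ≤ wt b) :
    (L - w) * (w + 1) ≤ ((Finset.univ : Finset (Fin L → Bool)).filter
      (fun b' => b' ≠ b ∧ w ≤ wt b' ∧ hammingDist b b' ≤ 2)).card := by
  classical
  set O := ones b with hO
  set j := O.card with hj
  have hjw : w ≤ j := hb
  have hjL : j ≤ L := by
    calc j ≤ (Finset.univ : Finset (Fin L)).card := Finset.card_filter_le _ _
    _ = L := by simp
  set S : Finset (Finset (Fin L)) := Finset.univ.filter
    (fun s => 1 ≤ s.card ∧ s.card ≤ 2 ∧ w ≤ (O \ s).card + (s \ O).card) with hS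
  have hSle : S.card ≤ ((Finset.univ : Finset (Fin L → Bool)).filter
      (fun b' => b' ≠ b ∧ w ≤ wt b' ∧ hammingDist b b' ≤ 2)).card := by
    apply Finset.card_le_card_of_injOn (f := flip b)
    · intro s hs
      simp only [Finset.mem_coe, hS, Finset.mem_filter, Finset.mem_univ, true_and] at hs
      obtain ⟨h1, h2, h3⟩ := hs
      simp only [Finset.mem_coe, Finset.mem_filter, Finset.mem_univ, true_and]
      refine ⟨?_, ?_, ?_⟩
      · intro hE
        have := hammingDist_flip b s
        rw [hE] at this
        simp at this
        omega
      · rw [wt_flip]; exact h3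
      · rw [hammingDist_flip]; exact h2
    · exact fun s _ t _ h => flip_injective b h
  refine le_trans ?_ hSle
  set T : Finset (Finset (Fin L)) := Finset.univ.filter
    (fun s => 1 ≤ s.card ∧ s.card ≤ 2) with hT
  have hTcard : T.card = L + L.choose 2 := by
    have hTeq : T = Finset.powersetCard 1 (Finset.univ : Finset (Fin L)) ∪
        Finset.powersetCard 2 Finset.univ := by
      ext s
      simp only [hT, Finset.mem_filter, Finset.mem_univ, true_and, Finset.mem_union,
        Finset.mem_powersetCard_univ]
      omega
    have hdisj : Disjoint (Finset.powersetCard 1 (Finset.univ : Finset (Fin L)))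
        (Finset.powersetCard 2 Finset.univ) := by
      rw [Finset.disjoint_left]
      intro s h1 h2
      rw [Finset.mem_powersetCard_univ] at h1 h2
      omega
    rw [hTeq, Finset.card_union_of_disjoint hdisj, Finset.card_powersetCard,
      Finset.card_powersetCard, Finset.card_univ, Fintype.card_fin, Nat.choose_one_right]
  have hinter : ∀ s : Finset (Fin L), ¬ s ⊆ O → (O ∩ s).card < s.card := by
    intro s hsub
    apply Finset.card_lt_card
    constructor
    · intro i hi
      exact (Finset.mem_inter.mp hi).2
    · intro hle
      exact hsub (fun i hi => (Finset.mem_inter.mp (hle hi)).1)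
  have hOs : ∀ s : Finset (Fin L), (O \ s).card + (O ∩ s).card = j := fun s =>
    Finset.card_sdiff_add_card_inter O s
  have hsO1 : ∀ s : Finset (Fin L), ¬ s ⊆ O → 1 ≤ (s \ O).card := fun s hsO =>
    Finset.card_pos.mpr (Finset.sdiff_nonempty.mpr hsO)
  rcases Nat.lt_or_ge j (w + 2) with hcase | hcase
  · rcases Nat.eq_or_lt_of_le hjw with hjew | hjgt
    · -- j = w
      have hsub : T \ (Finset.powersetCard 1 O ∪ Finset.powersetCard 2 O) ⊆ S := by
        intro s hs
        simp only [Finset.mem_sdiff, hT, Finset.mem_filter, Finset.mem_univ, true_and,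
          Finset.mem_union, Finset.mem_powersetCard] at hs
        obtain ⟨⟨h1, h2⟩, h3⟩ := hs
        simp only [hS, Finset.mem_filter, Finset.mem_univ, true_and]
        refine ⟨h1, h2, ?_⟩
        by_cases hsO : s ⊆ O
        · exfalso
          rcases (by omega : s.card = 1 ∨ s.card = 2) with h | h
          · exact h3 (Or.inl ⟨hsO, h⟩)
          · exact h3 (Or.inr ⟨hsO, h⟩)
        · have h4 := hinter s hsO
          have h5 := hOs s
          have h6 := hsO1 s hsO
          omega
      have hcard : T.card - (j + j.choose 2) ≤ S.card := by
        have hu : (Finset.powersetCard 1 O ∪ Finset.powersetCard 2 O).card ≤ j + j.choose 2 := by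
          have := Finset.card_union_le (Finset.powersetCard 1 O) (Finset.powersetCard 2 O)
          rw [Finset.card_powersetCard, Finset.card_powersetCard, ← hj,
            Nat.choose_one_right] at this
          exact this
        calc T.card - (j + j.choose 2)
            ≤ T.card - (Finset.powersetCard 1 O ∪ Finset.powersetCard 2 O).card := by omega
          _ ≤ (T \ (Finset.powersetCard 1 O ∪ Finset.powersetCard 2 O)).card :=
              Finset.le_card_sdiff _ _
          _ ≤ S.card := Finset.card_le_card hsub
      rw [hTcard] at hcard
      refine le_trans (Nat.le_sub_of_add_le ?_) hcard
      have := arith1 w (L - w) hw1 (by omega)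
      rw [Nat.add_sub_cancel' (by omega : w ≤ L)] at this
      rw [← hjew]
      exact this
    · -- j = w + 1
      have hjew : j = w + 1 := by omega
      have hsub : T \ Finset.powersetCard 2 O ⊆ S := by
        intro s hs
        simp only [Finset.mem_sdiff, hT, Finset.mem_filter, Finset.mem_univ, true_and,
          Finset.mem_powersetCard] at hs
        obtain ⟨⟨h1, h2⟩, h3⟩ := hs
        simp only [hS, Finset.mem_filter, Finset.mem_univ, true_and]
        refine ⟨h1, h2, ?_⟩
        by_cases hsO : s ⊆ O
        · have hs1 : s.card = 1 := by
            rcases (by omega : s.card = 1 ∨ s.card = 2) with h | h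
            · exact h
            · exact absurd ⟨hsO, h⟩ h3
          have h5 := hOs s
          have h6 : (O ∩ s).card = s.card := by
            rw [Finset.inter_eq_right.mpr hsO]
          skip
          omega
        · have h4 := hinter s hsO
          have h5 := hOs s
          have h6 := hsO1 s hsO
          omega
      have hcard : T.card - j.choose 2 ≤ S.card := by
        calc T.card - j.choose 2 = T.card - (Finset.powersetCard 2 O).card := by
              rw [Finset.card_powersetCard, ← hj]
          _ ≤ (T \ Finset.powersetCard 2 O).card := Finset.le_card_sdiff _ _
          _ ≤ S.card := Finset.card_le_card hsub
      rw [hTcard] at hcard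
      refine le_trans (Nat.le_sub_of_add_le ?_) hcard
      have := arith2 w (L - w) hw1 (by omega)
      rw [Nat.add_sub_cancel' (by omega : w ≤ L)] at this
      rw [hjew]
      exact this
  · -- j ≥ w + 2
    have hsub : T ⊆ S := by
      intro s hs
      simp only [hT, Finset.mem_filter, Finset.mem_univ, true_and] at hs
      obtain ⟨h1, h2⟩ := hs
      simp only [hS, Finset.mem_filter, Finset.mem_univ, true_and]
      refine ⟨h1, h2, ?_⟩
      have h5 := hOs s
      have h6 : (O ∩ s).card ≤ s.card := Finset.card_le_card Finset.inter_subset_right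
      omega
    have hcard : T.card ≤ S.card := Finset.card_le_card hsub
    rw [hTcard] at hcard
    refine le_trans ?_ hcard
    have := arith3 w (L - w) hw1 (by omega)
    rw [Nat.add_sub_cancel' (by omega : w ≤ L)] at this
    exact this

end SECCAux
namespace SECCAux

variable {m L : ℕ}

lemma wt_le {n : ℕ} (b : Fin n → Bool) : wt b ≤ n :=
  (Finset.card_filter_le _ _).trans (le_of_eq (by simp))

lemma ones_injective {n : ℕ} : Function.Injective (ones (n := n)) := by
  intro b b' h
  funext i
  have h1 : i ∈ ones b ↔ i ∈ ones b' := by rw [h]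
  simp only [ones, Finset.mem_filter, Finset.mem_univ, true_and] at h1
  cases hb : b i <;> cases hb' : b' i <;> simp [hb, hb'] at h1 ⊢

lemma card_wt_eq_le (L j : ℕ) :
    ((Finset.univ : Finset (Fin L → Bool)).filter (fun b => wt b = j)).card ≤ L.choose j := by
  classical
  have h : ((Finset.univ : Finset (Fin L → Bool)).filter (fun b => wt b = j)).card
      ≤ (Finset.powersetCard j (Finset.univ : Finset (Fin L))).card := by
    apply Finset.card_le_card_of_injOn (f := ones)
    · intro b hb
      simp only [Finset.mem_coe, Finset.mem_filter, Finset.mem_univ, true_and] at hb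
      rw [Finset.mem_coe, Finset.mem_powersetCard_univ, ← wt_eq_card_ones, hb]
    · exact fun b _ b' _ h => ones_injective h
  rwa [Finset.card_powersetCard, Finset.card_univ, Fintype.card_fin] at h

lemma card_good_le (L w : ℕ) :
    ((Finset.univ : Finset (Fin L → Bool)).filter (fun b => w ≤ wt b)).card
      ≤ ∑ j ∈ Finset.Icc w L, L.choose j := by
  classical
  rw [Finset.card_eq_sum_card_fiberwise (f := wt) (t := Finset.Icc w L)
    (fun b hb => by
      simp only [Finset.mem_coe, Finset.mem_filter, Finset.mem_univ, true_and] at hb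
      exact Finset.mem_Icc.mpr ⟨hb, wt_le b⟩)]
  apply Finset.sum_le_sum
  intro j _
  refine le_trans (Finset.card_le_card ?_) (card_wt_eq_le L j)
  intro b hb
  simp only [Finset.mem_filter, Finset.mem_univ, true_and] at hb ⊢
  exact hb.2

/-- The SECC space as a `Finset`. -/
def SpaceF (m L w : ℕ) : Finset (Fin (m * L) → Bool) :=
  Finset.univ.filter (fun x => ∀ i : Fin m, w ≤ wt (subblock m L x i))

lemma card_space_le (hL : 0 < L) (m w : ℕ) :
    (SpaceF m L w).card ≤ (∑ j ∈ Finset.Icc w L, L.choose j) ^ m := by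
  classical
  have h : (SpaceF m L w).card ≤ (Fintype.piFinset (fun _ : Fin m =>
      (Finset.univ : Finset (Fin L → Bool)).filter (fun b => w ≤ wt b))).card := by
    apply Finset.card_le_card_of_injOn (f := fun x i => subblock m L x i)
    · intro x hx
      simp only [Finset.mem_coe, SpaceF, Finset.mem_filter, Finset.mem_univ, true_and] at hx
      rw [Finset.mem_coe, Fintype.mem_piFinset]
      intro i
      simp only [Finset.mem_filter, Finset.mem_univ, true_and]
      exact hx i
    · intro x _ y _ h
      have := congrArg (asm hL) h
      rwa [asm_subblock hL x, asm_subblock hL y] at this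
  rw [Fintype.card_piFinset] at h
  refine h.trans ?_
  rw [Finset.prod_const, Finset.card_univ, Fintype.card_fin]
  exact Nat.pow_le_pow_left (card_good_le L w) m

/-- The ball of radius `2e` around `x` inside the SECC space, as a `Finset`. -/
def ballF (m L w e : ℕ) (x : Fin (m * L) → Bool) : Finset (Fin (m * L) → Bool) :=
  (SpaceF m L w).filter (fun y => hammingDist x y ≤ 2 * e)

lemma ball_card_ge {w e : ℕ} (hL : 0 < L) (hw1 : 1 ≤ w) (hw2 : w + 1 ≤ L) (he : e ≤ m)
    (x : Fin (m * L) → Bool) (hx : x ∈ SpaceF m L w) :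
    m.choose e * ((L - w) * (w + 1)) ^ e ≤ (ballF m L w e x).card := by
  classical
  simp only [SpaceF, Finset.mem_filter, Finset.mem_univ, true_and] at hx
  set K := (L - w) * (w + 1) with hK
  set A : Fin m → Finset (Fin L → Bool) := fun i =>
    Finset.univ.filter (fun b' => b' ≠ subblock m L x i ∧ w ≤ wt b' ∧
      hammingDist (subblock m L x i) b' ≤ 2) with hA
  have hAcard : ∀ i, K ≤ (A i).card := fun i => neighbor_card_ge hw1 hw2 _ (hx i)
  have hAx : ∀ i, subblock m L x i ∉ A i := by
    intro i hmem
    simp only [hA, Finset.mem_filter, Finset.mem_univ, true_and] at hmem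
    exact hmem.1 rfl
  set B : Finset (Fin m) → Fin m → Finset (Fin L → Bool) := fun E i =>
    if i ∈ E then A i else {subblock m L x i} with hB
  set D : Finset (Fin m → Fin L → Bool) :=
    (Finset.powersetCard e (Finset.univ : Finset (Fin m))).biUnion
      (fun E => Fintype.piFinset (B E)) with hD
  have hdisj : ∀ E ∈ Finset.powersetCard e (Finset.univ : Finset (Fin m)),
      ∀ E' ∈ Finset.powersetCard e (Finset.univ : Finset (Fin m)), E ≠ E' →
      Disjoint (Fintype.piFinset (B E)) (Fintype.piFinset (B E')) := by
    intro E hE E' hE' hne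
    rw [Finset.mem_powersetCard_univ] at hE hE'
    have hns : ¬ E ⊆ E' := by
      intro hsub
      exact hne (Finset.eq_of_subset_of_card_le hsub (by omega))
    obtain ⟨i, hiE, hiE'⟩ := Finset.not_subset.mp hns
    rw [Finset.disjoint_left]
    intro c hc hc'
    rw [Fintype.mem_piFinset] at hc hc'
    have h1 := hc i
    have h2 := hc' i
    simp only [hB, if_pos hiE, if_neg hiE', Finset.mem_singleton] at h1 h2
    rw [h2] at h1
    exact hAx i h1
  have hDcard : m.choose e * K ^ e ≤ D.card := by
    rw [hD, Finset.card_biUnion hdisj]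
    have hstep : ∀ E ∈ Finset.powersetCard e (Finset.univ : Finset (Fin m)),
        K ^ e ≤ (Fintype.piFinset (B E)).card := by
      intro E hE
      rw [Finset.mem_powersetCard_univ] at hE
      rw [Fintype.card_piFinset]
      have : ∀ i, (B E i).card = if i ∈ E then (A i).card else 1 := by
        intro i
        simp only [hB]
        split <;> simp
      simp only [this]
      rw [Finset.prod_ite_mem, Finset.univ_inter]
      calc K ^ e = ∏ _i ∈ E, K := by rw [Finset.prod_const, hE]
        _ ≤ ∏ i ∈ E, (A i).card := Finset.prod_le_prod' (fun i _ => hAcard i)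
    calc m.choose e * K ^ e
        = ∑ _E ∈ Finset.powersetCard e (Finset.univ : Finset (Fin m)), K ^ e := by
          rw [Finset.sum_const, Finset.card_powersetCard, Finset.card_univ, Fintype.card_fin,
            smul_eq_mul]
      _ ≤ ∑ E ∈ Finset.powersetCard e (Finset.univ : Finset (Fin m)),
            (Fintype.piFinset (B E)).card := Finset.sum_le_sum hstep
  refine hDcard.trans ?_
  apply Finset.card_le_card_of_injOn (f := asm hL)
  · intro c hc
    rw [Finset.mem_coe, hD, Finset.mem_biUnion] at hc
    obtain ⟨E, hE, hcE⟩ := hc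
    rw [Finset.mem_powersetCard_univ] at hE
    rw [Fintype.mem_piFinset] at hcE
    have hci : ∀ i, c i = subblock m L x i ∨ c i ∈ A i := by
      intro i
      have := hcE i
      simp only [hB] at this
      split at this
      · exact Or.inr this
      · exact Or.inl (Finset.mem_singleton.mp this)
    simp only [Finset.mem_coe, ballF, SpaceF, Finset.mem_filter, Finset.mem_univ, true_and]
    constructor
    · intro i
      rw [subblock_asm hL c i]
      rcases hci i with h | h
      · rw [h]; exact hx i
      · simp only [hA, Finset.mem_filter, Finset.mem_univ, true_and] at h
        exact h.2.1
    · have hdist : hammingDist x (asm hL c) =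
          ∑ i : Fin m, hammingDist (subblock m L x i) (c i) := by
        rw [hammingDist_eq_sum hL]
        refine Finset.sum_congr rfl fun i _ => ?_
        rw [subblock_asm hL c i]
      rw [hdist]
      calc ∑ i : Fin m, hammingDist (subblock m L x i) (c i)
          ≤ ∑ i : Fin m, (if i ∈ E then 2 else 0) := by
            apply Finset.sum_le_sum
            intro i _
            by_cases hiE : i ∈ E
            · rw [if_pos hiE]
              have := hcE i
              simp only [hB, if_pos hiE, hA, Finset.mem_filter, Finset.mem_univ,
                true_and] at this
              exact this.2.2
            · rw [if_neg hiE]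
              have := hcE i
              simp only [hB, if_neg hiE, Finset.mem_singleton] at this
              rw [this, hammingDist_self]
        _ = 2 * e := by
            rw [Finset.sum_ite_mem, Finset.univ_inter, Finset.sum_const, hE, smul_eq_mul,
              Nat.mul_comm]
  · exact fun c _ c' _ h => asm_injective hL h

/-- Sphere-packing bound for SECC codes. -/
lemma packing {w d e : ℕ} (hL : 0 < L) (hw1 : 1 ≤ w) (hw2 : w + 1 ≤ L) (he : e ≤ m)
    (hde : 4 * e < d) :
    maxSECC m L d w * (m.choose e * ((L - w) * (w + 1)) ^ e)
      ≤ (∑ j ∈ Finset.Icc w L, L.choose j) ^ m := by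
  classical
  set s : Set ℕ := {k | ∃ C : Finset (Fin (m * L) → Bool), isCode (SECCspace m L w) d C ∧
    C.card = k} with hs
  have hne : s.Nonempty := ⟨0, ∅, ⟨by simp [isCode], by simp⟩⟩
  have hbdd : BddAbove s := by
    refine ⟨Fintype.card (Fin (m * L) → Bool), ?_⟩
    rintro k ⟨C, _, rfl⟩
    exact Finset.card_le_univ C
  have hmem : maxSECC m L d w ∈ s := Nat.sSup_mem hne hbdd
  obtain ⟨C, hC, hCcard⟩ := hmem
  have hCspace : ∀ x ∈ C, x ∈ SpaceF m L w := by
    intro x hxC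
    have := hC.1 hxC
    simp only [SECCspace, Set.mem_setOf_eq] at this
    simp only [SpaceF, Finset.mem_filter, Finset.mem_univ, true_and]
    exact this
  have hballdisj : ∀ x ∈ C, ∀ x' ∈ C, x ≠ x' →
      Disjoint (ballF m L w e x) (ballF m L w e x') := by
    intro x hxC x' hx'C hne
    rw [Finset.disjoint_left]
    intro y hy hy'
    simp only [ballF, Finset.mem_filter] at hy hy'
    have htri : hammingDist x x' ≤ hammingDist x y + hammingDist y x' := hammingDist_triangle _ _ _
    rw [hammingDist_comm y x'] at htri
    have := hC.2 x hxC x' hx'C hne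
    omega
  calc maxSECC m L d w * (m.choose e * ((L - w) * (w + 1)) ^ e)
      = ∑ _x ∈ C, m.choose e * ((L - w) * (w + 1)) ^ e := by
        rw [Finset.sum_const, hCcard, smul_eq_mul]
    _ ≤ ∑ x ∈ C, (ballF m L w e x).card :=
        Finset.sum_le_sum (fun x hxC => ball_card_ge hL hw1 hw2 he x (hCspace x hxC))
    _ = (C.biUnion (ballF m L w e)).card := (Finset.card_biUnion hballdisj).symm
    _ ≤ (SpaceF m L w).card := by
        apply Finset.card_le_card
        intro y hy
        rw [Finset.mem_biUnion] at hy
        obtain ⟨x, _, hyx⟩ := hy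
        exact Finset.mem_of_mem_filter y hyx
    _ ≤ (∑ j ∈ Finset.Icc w L, L.choose j) ^ m := card_space_le hL m w

end SECCAux
namespace SECCAux

private lemma mono_below {f : ℕ → ℕ} : ∀ e : ℕ, (∀ k, k < e → f k ≤ f (k + 1)) →
    ∀ k, k ≤ e → f k ≤ f e := by
  intro e
  induction e with
  | zero => intro _ k hk; rw [Nat.le_zero.mp hk]
  | succ n ih =>
    intro h k hk
    rcases Nat.eq_or_lt_of_le hk with h1 | h1
    · rw [h1]
    · exact le_trans (ih (fun k hk => h k (by omega)) k (by omega)) (h n (by omega))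

private lemma mono_above {f : ℕ → ℕ} {e m : ℕ} (h : ∀ k, e ≤ k → k < m → f (k + 1) ≤ f k) :
    ∀ k, e ≤ k → k ≤ m → f k ≤ f e := by
  intro k hek
  induction k, hek using Nat.le_induction with
  | base => intro _; exact le_refl _
  | succ n hn ih =>
    intro hnm
    exact le_trans (h n hn (by omega)) (ih (by omega))

lemma entropy_nat (m e : ℕ) (he : e ≤ m) :
    m ^ m ≤ (m + 1) * (m.choose e * (e ^ e * (m - e) ^ (m - e))) := by
  classical
  set T : ℕ → ℕ := fun k => m.choose k * (e ^ k * (m - e) ^ (m - k)) with hT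
  have hTmax : ∀ k, k ≤ m → T k ≤ T e := by
    rcases Nat.eq_or_lt_of_le he with hem | hem
    · -- e = m
      subst hem
      intro k hk
      rcases Nat.eq_or_lt_of_le hk with h1 | h1
      · rw [h1]
      · simp only [hT]
        rw [Nat.sub_self, Nat.pow_zero, Nat.zero_pow (by omega : 0 < e - k)]
        simp
    rcases Nat.eq_zero_or_pos e with he0 | he0
    · -- e = 0
      subst he0
      intro k hk
      rcases Nat.eq_zero_or_pos k with h1 | h1
      · rw [h1]
      · simp only [hT]
        rw [Nat.zero_pow (by omega : 0 < k)]
        simp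
    -- 0 < e < m
    have hkey : ∀ k, k < m → T (k + 1) * ((k + 1) * (m - e)) = T k * ((m - k) * e) := by
      intro k hk
      simp only [hT]
      have h1 : m - k = (m - (k + 1)) + 1 := by omega
      have h2 : (m - e) ^ (m - k) = (m - e) ^ (m - (k + 1)) * (m - e) := by
        rw [h1, pow_succ]
      have h3 : e ^ (k + 1) = e ^ k * e := pow_succ e k
      have h4 := Nat.choose_succ_right_eq m k
      calc m.choose (k + 1) * (e ^ (k + 1) * (m - e) ^ (m - (k + 1))) * ((k + 1) * (m - e))
          = (m.choose (k + 1) * (k + 1)) * (e ^ (k + 1) * ((m - e) ^ (m - (k + 1)) * (m - e))) := by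
            ring
        _ = (m.choose k * (m - k)) * (e ^ k * e * (m - e) ^ (m - k)) := by rw [h4, h2, h3]
        _ = m.choose k * (e ^ k * (m - e) ^ (m - k)) * ((m - k) * e) := by ring
    have hpos : ∀ k : ℕ, 0 < (k + 1) * (m - e) := fun k =>
      Nat.mul_pos (Nat.succ_pos k) (by omega)
    have hup : ∀ k, k < e → T k ≤ T (k + 1) := by
      intro k hk
      apply Nat.le_of_mul_le_mul_right _ (hpos k)
      rw [hkey k (by omega)]
      refine Nat.mul_le_mul_left _ ?_
      calc (k + 1) * (m - e) ≤ e * (m - k) := Nat.mul_le_mul (by omega) (by omega)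
        _ = (m - k) * e := Nat.mul_comm _ _
    have hdown : ∀ k, e ≤ k → k < m → T (k + 1) ≤ T k := by
      intro k hek hkm
      apply Nat.le_of_mul_le_mul_right _ (hpos k)
      rw [hkey k hkm]
      refine Nat.mul_le_mul_left _ ?_
      calc (m - k) * e ≤ (m - e) * (k + 1) := Nat.mul_le_mul (by omega) (by omega)
        _ = (k + 1) * (m - e) := Nat.mul_comm _ _
    intro k hk
    rcases Nat.le_total k e with h1 | h1
    · exact mono_below e hup k h1
    · exact mono_above hdown k h1 hk
  have hbinom : m ^ m = ∑ k ∈ Finset.range (m + 1), e ^ k * (m - e) ^ (m - k) * m.choose k := by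
    have := add_pow e (m - e) m
    rw [Nat.add_sub_cancel' he] at this
    exact this
  calc m ^ m = ∑ k ∈ Finset.range (m + 1), e ^ k * (m - e) ^ (m - k) * m.choose k := hbinom
    _ ≤ ∑ _k ∈ Finset.range (m + 1), T e := by
        apply Finset.sum_le_sum
        intro k hk
        rw [Finset.mem_range] at hk
        have : e ^ k * (m - e) ^ (m - k) * m.choose k = T k := by simp only [hT]; ring
        rw [this]
        exact hTmax k (by omega)
    _ = (m + 1) * T e := by rw [Finset.sum_const, Finset.card_range, smul_eq_mul]

end SECCAux
namespace SECCAux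

lemma one_le_maxSECC (m L d w : ℕ) (hw : w ≤ L) : 1 ≤ maxSECC m L d w := by
  classical
  have hbdd : BddAbove {k | ∃ C : Finset (Fin (m * L) → Bool),
      isCode (SECCspace m L w) d C ∧ C.card = k} := by
    refine ⟨Fintype.card (Fin (m * L) → Bool), ?_⟩
    rintro k ⟨C, _, rfl⟩
    exact Finset.card_le_univ C
  have hmem : 1 ∈ {k | ∃ C : Finset (Fin (m * L) → Bool),
      isCode (SECCspace m L w) d C ∧ C.card = k} := by
    refine ⟨{fun _ => true}, ⟨?_, ?_⟩, by simp⟩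
    · intro x hx
      simp only [Finset.coe_singleton, Set.mem_singleton_iff] at hx
      subst hx
      intro i
      have hwt : wt (subblock m L (fun _ => true) i) = L := by
        simp [wt, subblock]
      omega
    · intro x hx y hy hxy
      simp only [Finset.mem_singleton] at hx hy
      exact absurd (hx.trans hy.symm) hxy
  exact le_csSup hbdd hmem

lemma binent_identity {m e : ℕ} (h1 : 1 ≤ e) (h2 : e < m) :
    (m : ℝ) * binent ((e : ℝ) / (m : ℝ)) =
      (m : ℝ) * Real.logb 2 (m : ℝ) - (e : ℝ) * Real.logb 2 (e : ℝ)
        - ((m - e : ℕ) : ℝ) * Real.logb 2 ((m - e : ℕ) : ℝ) := by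
  have hm0 : (m : ℝ) ≠ 0 := Nat.cast_ne_zero.mpr (by omega)
  have he0 : (e : ℝ) ≠ 0 := Nat.cast_ne_zero.mpr (by omega)
  have hme : ((m - e : ℕ) : ℝ) = (m : ℝ) - e := by
    rw [Nat.cast_sub (le_of_lt h2)]
  have hme0 : (m : ℝ) - e ≠ 0 := by
    have : (e : ℝ) < m := Nat.cast_lt.mpr h2
    intro h; linarith
  rw [binent, hme]
  have h1m : 1 - (e : ℝ) / m = ((m : ℝ) - e) / m := by field_simp
  rw [h1m, Real.logb_div he0 hm0, Real.logb_div hme0 hm0]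
  field_simp
  ring

/-- `log (m+1) / (m * c) → 0`. -/
lemma tendsto_logb_succ_div (c : ℝ) (hc : 0 < c) :
    Filter.Tendsto (fun m : ℕ => Real.logb 2 ((m : ℝ) + 1) / ((m : ℝ) * c))
      Filter.atTop (nhds 0) := by
  have hlog : Filter.Tendsto (fun x : ℝ => Real.log x / x) Filter.atTop (nhds 0) := by
    have := Real.isLittleO_log_id_atTop.tendsto_div_nhds_zero
    simpa using this
  have hcast : Filter.Tendsto (fun m : ℕ => (m : ℝ) + 1) Filter.atTop Filter.atTop :=
    Filter.tendsto_atTop_add_const_right _ 1 tendsto_natCast_atTop_atTop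
  have hA : Filter.Tendsto (fun m : ℕ => Real.log ((m : ℝ) + 1) / ((m : ℝ) + 1))
      Filter.atTop (nhds 0) := hlog.comp hcast
  have hB : Filter.Tendsto (fun m : ℕ => ((m : ℝ) + 1) / ((m : ℝ) * c * Real.log 2))
      Filter.atTop (nhds (1 / (c * Real.log 2))) := by
    have h1 : Filter.Tendsto (fun m : ℕ => 1 + 1 / (m : ℝ)) Filter.atTop (nhds 1) := by
      have := tendsto_one_div_atTop_nhds_zero_nat (𝕜 := ℝ)
      have h2 := Filter.Tendsto.const_add (1 : ℝ) this
      simpa using h2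
    have h3 : Filter.Tendsto (fun _ : ℕ => 1 / (c * Real.log 2)) Filter.atTop
        (nhds (1 / (c * Real.log 2))) := tendsto_const_nhds
    have h4 := h1.mul h3
    rw [one_mul] at h4
    apply h4.congr'
    filter_upwards [Filter.eventually_gt_atTop 0] with m hm
    have hm0 : (m : ℝ) ≠ 0 := Nat.cast_ne_zero.mpr (by omega)
    have hl2 : Real.log 2 ≠ 0 := Real.log_ne_zero_of_pos_of_ne_one (by norm_num) (by norm_num)
    field_simp
    all_goals first | ring1 | tauto | exact Or.inl (by ring)
  have h5 := hA.mul hB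
  rw [zero_mul] at h5
  apply h5.congr'
  filter_upwards [Filter.eventually_gt_atTop 0] with m hm
  have hm1 : (0 : ℝ) < (m : ℝ) + 1 := by positivity
  have hm0 : (m : ℝ) ≠ 0 := Nat.cast_ne_zero.mpr (by omega)
  have hl2 : Real.log 2 ≠ 0 := Real.log_ne_zero_of_pos_of_ne_one (by norm_num) (by norm_num)
  rw [Real.logb]
  field_simp
  all_goals first | ring1 | tauto | exact Or.inl (by ring)

lemma continuousAt_binent {a : ℝ} (ha0 : 0 < a) (ha1 : a < 1) :
    ContinuousAt binent a := by
  have h1 : ContinuousAt (fun p : ℝ => p * Real.logb 2 p) a :=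
    continuousAt_id.mul (Real.continuousAt_logb (ne_of_gt ha0))
  have h2 : ContinuousAt (fun p : ℝ => (1 - p) * Real.logb 2 (1 - p)) a := by
    have hsub : ContinuousAt (fun p : ℝ => 1 - p) a := continuousAt_const.sub continuousAt_id
    have hlogb : ContinuousAt (Real.logb 2) (1 - a) :=
      Real.continuousAt_logb (by intro h; rw [sub_eq_zero] at h; linarith)
    exact hsub.mul (hlogb.comp hsub)
  exact (h1.neg).sub h2

end SECCAux

namespace SECCAux

/-- The distance sequence. -/
noncomputable def dmF (L : ℕ) (δ : ℝ) (m : ℕ) : ℕ := ⌊(m : ℝ) * L * δ⌋₊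

/-- The ball-radius-parameter sequence. -/
noncomputable def emF (L : ℕ) (δ : ℝ) (m : ℕ) : ℕ := (dmF L δ m - 1) / 4

end SECCAux

set_option maxHeartbeats 1000000 in
/-- Asymptotic sphere-packing bound for SECCs (`0 < δ < min{δ*, 4/L}`):
`σ(L,δ,w/L) ≤ (1/L)·log(Σ_{j=w}^{L} C(L,j)) − (1/L)·h(Lδ/4) − (δ/4)·log((L-w)(w+1))`. -/
theorem stmt_16 (L w : ℕ) (hL : 0 < L) (hw1 : 1 ≤ w) (hw2 : w ≤ L - 1)
    (δ : ℝ) (hδ0 : 0 < δ)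
    (hδ : δ < min (2 * ((w : ℝ) / L) * (1 - (w : ℝ) / L)) (4 / (L : ℝ))) :
    sigmaRate L δ w ≤
      (1 / (L : ℝ)) * Real.logb 2 ((∑ j ∈ Finset.Icc w L, L.choose j : ℕ))
      - (1 / (L : ℝ)) * binent ((L : ℝ) * δ / 4)
      - (δ / 4) * Real.logb 2 (((L - w) * (w + 1) : ℕ)) := by
  classical
  have hw2' : w + 1 ≤ L := by omega
  have hδ2 : δ < 4 / (L : ℝ) := lt_of_lt_of_le hδ (min_le_right _ _)
  have hL0 : (0 : ℝ) < L := by exact_mod_cast hL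
  set N : ℕ := ∑ j ∈ Finset.Icc w L, L.choose j with hN
  set K : ℕ := (L - w) * (w + 1) with hK
  have hN1 : 1 ≤ N := by
    have hmem : L ∈ Finset.Icc w L := Finset.mem_Icc.mpr ⟨by omega, le_refl L⟩
    calc 1 = L.choose L := (Nat.choose_self L).symm
      _ ≤ N := Finset.single_le_sum (f := fun j => L.choose j)
          (fun _ _ => Nat.zero_le _) hmem
  have hK1 : 1 ≤ K := Nat.mul_pos (by omega) (by omega)
  set a : ℝ := (L : ℝ) * δ / 4 with haa
  have ha0 : 0 < a := by rw [haa]; positivity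
  have hLd4 : (L : ℝ) * δ < 4 := by
    have h := (lt_div_iff₀ hL0).mp hδ2
    nlinarith [h]
  have ha1 : a < 1 := by rw [haa]; linarith
  set f : ℕ → ℝ := fun m => Real.logb 2 (maxSECC m L (SECCAux.dmF L δ m) w) / ((m : ℝ) * L) with hfdef
  set G : ℕ → ℝ := fun m => ((m : ℝ) * Real.logb 2 N
      - (m : ℝ) * binent ((SECCAux.emF L δ m : ℝ) / (m : ℝ))
      + Real.logb 2 ((m : ℝ) + 1) - (SECCAux.emF L δ m : ℝ) * Real.logb 2 K) / ((m : ℝ) * L) with hGdef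
  have hsig : sigmaRate L δ w = Filter.limsup f Filter.atTop := by
    simp only [sigmaRate, hfdef, SECCAux.dmF]
  -- basic estimates
  have hdle : ∀ m : ℕ, (SECCAux.dmF L δ m : ℝ) ≤ (m : ℝ) * L * δ := by
    intro m
    rw [SECCAux.dmF]
    exact Nat.floor_le (by positivity)
  have h4em : ∀ m : ℕ, 4 * SECCAux.emF L δ m ≤ SECCAux.dmF L δ m := by
    intro m
    simp only [SECCAux.emF]
    have h := Nat.div_mul_le_self (SECCAux.dmF L δ m - 1) 4
    omega
  have hemle : ∀ m : ℕ, 4 * (SECCAux.emF L δ m : ℝ) ≤ (m : ℝ) * L * δ := by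
    intro m
    have h1 : (4 * SECCAux.emF L δ m : ℕ) ≤ (SECCAux.dmF L δ m : ℕ) := h4em m
    have h2 : ((4 * SECCAux.emF L δ m : ℕ) : ℝ) ≤ ((SECCAux.dmF L δ m : ℕ) : ℝ) := by exact_mod_cast h1
    push_cast at h2
    linarith [hdle m]
  have hemlow : ∀ m : ℕ, 1 ≤ SECCAux.dmF L δ m → (SECCAux.dmF L δ m : ℝ) ≤ 4 * (SECCAux.emF L δ m : ℝ) + 4 := by
    intro m hm1
    have hmod := Nat.div_add_mod (SECCAux.dmF L δ m - 1) 4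
    have hmodlt : (SECCAux.dmF L δ m - 1) % 4 < 4 := Nat.mod_lt _ (by norm_num)
    have h : SECCAux.dmF L δ m ≤ 4 * SECCAux.emF L δ m + 4 := by
      simp only [SECCAux.emF]
      omega
    exact_mod_cast h
  -- eventual facts
  have hev1 : ∀ᶠ m : ℕ in Filter.atTop, 9 ≤ SECCAux.dmF L δ m := by
    obtain ⟨M, hM⟩ := exists_nat_ge ((9 : ℝ) / ((L : ℝ) * δ))
    rw [Filter.eventually_atTop]
    refine ⟨M, fun m hm => ?_⟩
    have hMm : ((9 : ℝ) / ((L : ℝ) * δ)) ≤ (m : ℝ) :=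
      le_trans hM (by exact_mod_cast hm)
    have hld : (0 : ℝ) < (L : ℝ) * δ := by positivity
    rw [SECCAux.dmF]
    apply Nat.le_floor
    have h9 := (div_le_iff₀ hld).mp hMm
    push_cast
    nlinarith [h9]
  have hev2 : ∀ᶠ m : ℕ in Filter.atTop, SECCAux.emF L δ m < m := by
    filter_upwards [Filter.eventually_ge_atTop 1] with m hm
    have hmR : (1 : ℝ) ≤ (m : ℝ) := by exact_mod_cast hm
    have h1 := hemle m
    have : (SECCAux.emF L δ m : ℝ) < (m : ℝ) := by nlinarith [hLd4]
    exact_mod_cast this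
  have hev3 : ∀ᶠ m : ℕ in Filter.atTop, 1 ≤ SECCAux.emF L δ m := by
    filter_upwards [hev1] with m hm
    simp only [SECCAux.emF]
    omega
  -- the eventual upper bound f ≤ G
  have hfg : ∀ᶠ m : ℕ in Filter.atTop, f m ≤ G m := by
    filter_upwards [hev1, hev2, hev3, Filter.eventually_ge_atTop 1] with m h9 hlt h1e h1m
    have hmR : (1 : ℝ) ≤ (m : ℝ) := by exact_mod_cast h1m
    have hmR0 : (0 : ℝ) < (m : ℝ) := by linarith
    have hmL : (0 : ℝ) < (m : ℝ) * L := by positivity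
    simp only [hfdef, hGdef]
    have hS1 : 1 ≤ maxSECC m L (SECCAux.dmF L δ m) w := SECCAux.one_le_maxSECC m L (SECCAux.dmF L δ m) w (by omega)
    have h4lt : 4 * SECCAux.emF L δ m < SECCAux.dmF L δ m := by
      simp only [SECCAux.emF]
      have := Nat.div_mul_le_self (SECCAux.dmF L δ m - 1) 4
      omega
    have hpack := SECCAux.packing (m := m) (w := w) (d := SECCAux.dmF L δ m) (e := SECCAux.emF L δ m) hL hw1 hw2'
      (le_of_lt hlt) h4lt
    have hent := SECCAux.entropy_nat m (SECCAux.emF L δ m) (le_of_lt hlt)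
    have hC1 : 0 < m.choose (SECCAux.emF L δ m) := Nat.choose_pos (le_of_lt hlt)
    have hcast1 : ((maxSECC m L (SECCAux.dmF L δ m) w : ℕ) : ℝ) *
        ((m.choose (SECCAux.emF L δ m) : ℝ) * (K : ℝ) ^ (SECCAux.emF L δ m)) ≤ (N : ℝ) ^ m := by
      exact_mod_cast hpack
    have hcast2 : (m : ℝ) ^ m ≤ ((m : ℝ) + 1) * ((m.choose (SECCAux.emF L δ m) : ℝ) *
        ((SECCAux.emF L δ m : ℝ) ^ (SECCAux.emF L δ m) * ((m - SECCAux.emF L δ m : ℕ) : ℝ) ^ (m - SECCAux.emF L δ m))) := by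
      exact_mod_cast hent
    have hSpos : (0 : ℝ) < ((maxSECC m L (SECCAux.dmF L δ m) w : ℕ) : ℝ) := by exact_mod_cast hS1
    have hCpos : (0 : ℝ) < (m.choose (SECCAux.emF L δ m) : ℝ) := by exact_mod_cast hC1
    have hKpos : (0 : ℝ) < (K : ℝ) := by exact_mod_cast hK1
    have hNpos : (0 : ℝ) < (N : ℝ) := by exact_mod_cast hN1
    have hepos : (0 : ℝ) < (SECCAux.emF L δ m : ℝ) := by exact_mod_cast h1e
    have hmepos : (0 : ℝ) < ((m - SECCAux.emF L δ m : ℕ) : ℝ) := by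
      have h : 0 < m - SECCAux.emF L δ m := by omega
      exact_mod_cast h
    have hlog1 : Real.logb 2 ((maxSECC m L (SECCAux.dmF L δ m) w : ℕ) : ℝ)
        + (Real.logb 2 (m.choose (SECCAux.emF L δ m)) + (SECCAux.emF L δ m : ℝ) * Real.logb 2 K)
        ≤ (m : ℝ) * Real.logb 2 N := by
      have h := Real.logb_le_logb_of_le (b := 2) one_lt_two (by positivity) hcast1
      rwa [Real.logb_mul (ne_of_gt hSpos) (by positivity),
        Real.logb_mul (ne_of_gt hCpos) (by positivity),
        Real.logb_pow, Real.logb_pow] at h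
    have hlog2 : (m : ℝ) * Real.logb 2 m ≤ Real.logb 2 ((m : ℝ) + 1)
        + (Real.logb 2 (m.choose (SECCAux.emF L δ m)) + ((SECCAux.emF L δ m : ℝ) * Real.logb 2 (SECCAux.emF L δ m)
          + ((m - SECCAux.emF L δ m : ℕ) : ℝ) * Real.logb 2 ((m - SECCAux.emF L δ m : ℕ) : ℝ))) := by
      have h := Real.logb_le_logb_of_le (b := 2) one_lt_two (by positivity) hcast2
      rwa [Real.logb_pow, Real.logb_mul (by positivity) (by positivity),
        Real.logb_mul (ne_of_gt hCpos) (by positivity),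
        Real.logb_mul (by positivity) (by positivity),
        Real.logb_pow, Real.logb_pow] at h
    have hbi := SECCAux.binent_identity h1e hlt
    have hnum : Real.logb 2 ((maxSECC m L (SECCAux.dmF L δ m) w : ℕ) : ℝ)
        ≤ (m : ℝ) * Real.logb 2 N - (m : ℝ) * binent ((SECCAux.emF L δ m : ℝ) / (m : ℝ))
          + Real.logb 2 ((m : ℝ) + 1) - (SECCAux.emF L δ m : ℝ) * Real.logb 2 K := by
      rw [hbi]
      linarith
    first
      | exact div_le_div_of_le_of_nonneg hnum hmL.le
      | exact (div_le_div_right hmL).mpr hnum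
      | exact div_le_div_of_nonneg_right hnum hmL
      | gcongr
  -- convergence of the bound
  have hpa : Filter.Tendsto (fun m : ℕ => (SECCAux.emF L δ m : ℝ) / (m : ℝ)) Filter.atTop (nhds a) := by
    have hlow : Filter.Tendsto (fun m : ℕ => a - 5 / 4 * (1 / (m : ℝ)))
        Filter.atTop (nhds a) := by
      have h := tendsto_one_div_atTop_nhds_zero_nat (𝕜 := ℝ)
      have h2 := h.const_mul (5 / 4 : ℝ)
      have h3 := h2.const_sub a
      simpa using h3
    apply tendsto_of_tendsto_of_tendsto_of_le_of_le' hlow tendsto_const_nhds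
    · filter_upwards [hev1, Filter.eventually_ge_atTop 1] with m h9 h1m
      have hmR : (1 : ℝ) ≤ (m : ℝ) := by exact_mod_cast h1m
      have hmR0 : (0 : ℝ) < (m : ℝ) := by linarith
      have hfl : (m : ℝ) * L * δ < (SECCAux.dmF L δ m : ℝ) + 1 := by
        rw [SECCAux.dmF]
        exact Nat.lt_floor_add_one _
      have hcast := hemlow m (by omega)
      rw [le_div_iff₀ hmR0]
      have hxx : (a - 5 / 4 * (1 / (m : ℝ))) * m = a * m - 5 / 4 := by
        field_simp
      rw [hxx, haa]
      nlinarith [hfl, hcast]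
    · filter_upwards [Filter.eventually_ge_atTop 1] with m h1m
      have hmR : (1 : ℝ) ≤ (m : ℝ) := by exact_mod_cast h1m
      have hmR0 : (0 : ℝ) < (m : ℝ) := by linarith
      rw [div_le_iff₀ hmR0, haa]
      nlinarith [hemle m]
  have hbin : Filter.Tendsto (fun m : ℕ => binent ((SECCAux.emF L δ m : ℝ) / (m : ℝ)))
      Filter.atTop (nhds (binent a)) :=
    ((SECCAux.continuousAt_binent ha0 ha1).tendsto).comp hpa
  have hlog3 := SECCAux.tendsto_logb_succ_div (L : ℝ) hL0
  have hHtend : Filter.Tendsto (fun m : ℕ => Real.logb 2 (N : ℝ) / (L : ℝ)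
      - binent ((SECCAux.emF L δ m : ℝ) / (m : ℝ)) / (L : ℝ)
      + Real.logb 2 ((m : ℝ) + 1) / ((m : ℝ) * (L : ℝ))
      - ((SECCAux.emF L δ m : ℝ) / (m : ℝ)) * Real.logb 2 (K : ℝ) / (L : ℝ)) Filter.atTop
      (nhds (Real.logb 2 (N : ℝ) / (L : ℝ) - binent a / (L : ℝ) + 0
        - a * Real.logb 2 (K : ℝ) / (L : ℝ))) := by
    exact ((tendsto_const_nhds.sub (hbin.div_const (L : ℝ))).add hlog3).sub
      ((hpa.mul_const (Real.logb 2 (K : ℝ))).div_const (L : ℝ))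
  have hGH : (fun m : ℕ => Real.logb 2 (N : ℝ) / (L : ℝ)
      - binent ((SECCAux.emF L δ m : ℝ) / (m : ℝ)) / (L : ℝ)
      + Real.logb 2 ((m : ℝ) + 1) / ((m : ℝ) * (L : ℝ))
      - ((SECCAux.emF L δ m : ℝ) / (m : ℝ)) * Real.logb 2 (K : ℝ) / (L : ℝ)) =ᶠ[Filter.atTop] G := by
    filter_upwards [Filter.eventually_ge_atTop 1] with m h1m
    have hmR : (1 : ℝ) ≤ (m : ℝ) := by exact_mod_cast h1m
    have hmR0 : (m : ℝ) ≠ 0 := by intro h; rw [h] at hmR; linarith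
    simp only [hGdef]
    field_simp
  have hGtend : Filter.Tendsto G Filter.atTop
      (nhds (Real.logb 2 (N : ℝ) / (L : ℝ) - binent a / (L : ℝ) + 0
        - a * Real.logb 2 (K : ℝ) / (L : ℝ))) := hHtend.congr' hGH
  -- boundedness facts
  have hf0 : ∀ m : ℕ, 0 ≤ f m := by
    intro m
    simp only [hfdef]
    apply div_nonneg _ (by positivity)
    apply Real.logb_nonneg one_lt_two
    exact_mod_cast SECCAux.one_le_maxSECC m L (SECCAux.dmF L δ m) w (by omega)
  have hbound : Filter.IsBoundedUnder (· ≥ ·) Filter.atTop f :=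
    ⟨0, Filter.eventually_map.mpr (Filter.Eventually.of_forall hf0)⟩
  have hcb : Filter.IsCoboundedUnder (· ≤ ·) Filter.atTop f :=
    hbound.isCoboundedUnder_le
  have hbd : Filter.IsBoundedUnder (· ≤ ·) Filter.atTop G := hGtend.isBoundedUnder_le
  -- conclusion
  have hle := Filter.limsup_le_limsup hfg hcb hbd
  rw [hGtend.limsup_eq] at hle
  rw [hsig]
  refine le_trans hle (le_of_eq ?_)
  rw [haa]
  field_simp
  ring
end

section
/- Let L ≥ 4 be an even integer and define, for real δ ∈ [0,1], f̃_L(δ) = 1 − h(δ) − (1/L)·log C(L,L/2) + (δ/2)·log(L/2) + (1/L)·h(δL/4), where C(a,b) is the binomial coefficient. Then f̃_L(0) > 0 and f̃_L(1/L) < 0; consequently there exists δ̃ ∈ (0, 1/L) such that f̃_L(δ̃) = 0 and f̃_L(δ) > 0 for all δ with 0 ≤ δ < δ̃. -/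
open Finset Filter

/-- The function `f̃_L(δ) = 1 − h(δ) − (1/L)·log C(L,L/2) + (δ/2)·log(L/2)
    + (1/L)·h(δL/4)`. -/
noncomputable def fTilde (L : ℕ) (δ : ℝ) : ℝ :=
  1 - binent δ - (1 / (L : ℝ)) * Real.logb 2 (L.choose (L / 2))
    + (δ / 2) * Real.logb 2 ((L : ℝ) / 2) + (1 / (L : ℝ)) * binent (δ * (L : ℝ) / 4)

lemma aux16 (n : ℕ) (hn : 1 ≤ n) : 16 ^ n ≤ 4 * n * (Nat.centralBinom n)^2 := by
  induction n, hn using Nat.le_induction with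
  | base => decide
  | succ n hn ih =>
    have key := Nat.succ_mul_centralBinom_succ n
    apply Nat.le_of_mul_le_mul_right _ (Nat.succ_pos n)
    calc 16 ^ (n+1) * (n+1) = 16 * 16 ^ n * (n+1) := by ring
      _ ≤ 16 * (4 * n * (Nat.centralBinom n)^2) * (n+1) :=
          Nat.mul_le_mul_right _ (Nat.mul_le_mul_left 16 ih)
      _ ≤ 4 * (2 * (2*n+1) * Nat.centralBinom n)^2 := by nlinarith [sq_nonneg (Nat.centralBinom n)]
      _ = 4 * ((n+1) * Nat.centralBinom (n+1))^2 := by rw [key]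
      _ = 4 * (n+1) * (Nat.centralBinom (n+1))^2 * (n+1) := by ring

lemma logb3_gt : (4:ℝ)/3 < Real.logb 2 3 := by
  have h1 : Real.log 16 < Real.log 27 := Real.log_lt_log (by norm_num) (by norm_num)
  have h16 : Real.log 16 = 4 * Real.log 2 := by
    rw [show (16:ℝ) = 2^4 by norm_num, Real.log_pow]; push_cast; ring
  have h27 : Real.log 27 = 3 * Real.log 3 := by
    rw [show (27:ℝ) = 3^3 by norm_num, Real.log_pow]; push_cast; ring
  have hl2 : 0 < Real.log 2 := Real.log_pos (by norm_num)
  rw [Real.logb, lt_div_iff₀ hl2]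
  nlinarith

lemma binent_quarter : binent (1/4) = 2 - (3/4) * Real.logb 2 3 := by
  have h4 : Real.logb 2 (1/4 : ℝ) = -2 := by
    rw [show (1/4:ℝ) = ((2:ℝ)^(2:ℕ))⁻¹ by norm_num, Real.logb_inv, Real.logb_pow,
      Real.logb_self_eq_one (by norm_num)]
    norm_num
  have h34 : Real.logb 2 (3/4 : ℝ) = Real.logb 2 3 - 2 := by
    rw [Real.logb_div (by norm_num) (by norm_num),
      show (4:ℝ) = (2:ℝ)^(2:ℕ) by norm_num, Real.logb_pow,
      Real.logb_self_eq_one (by norm_num)]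
    norm_num
  rw [binent, show (1:ℝ) - 1/4 = 3/4 by norm_num, h4, h34]
  ring

lemma binent_inv {x : ℝ} (hx : 1 < x) :
    x * binent (1/x) = Real.logb 2 x + (x - 1) * (Real.logb 2 x - Real.logb 2 (x-1)) := by
  have hx0 : x ≠ 0 := by linarith
  have hx1 : x - 1 ≠ 0 := by intro h; nlinarith [h]
  have h1 : (1:ℝ) - 1/x = (x-1)/x := by field_simp
  rw [binent, h1, one_div, Real.logb_inv, Real.logb_div hx1 hx0]
  field_simp
  ring

lemma pow_succ_logb (m : ℕ) (hm : 1 ≤ m) :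
    1 ≤ (m:ℝ) * (Real.logb 2 ((m:ℝ)+1) - Real.logb 2 (m:ℝ)) := by
  have hm0 : (0:ℝ) < m := by exact_mod_cast hm
  have h2 : (2:ℝ) ≤ (1 + 1/(m:ℝ))^m := by
    have ha : (-2:ℝ) ≤ 1/(m:ℝ) := le_trans (by norm_num) (by positivity : (0:ℝ) ≤ 1/(m:ℝ))
    have h := one_add_mul_le_pow ha m
    rw [mul_one_div, div_self (ne_of_gt hm0)] at h
    linarith
  have h3 : (1:ℝ) ≤ Real.logb 2 ((1 + 1/(m:ℝ))^m) := by
    calc (1:ℝ) = Real.logb 2 2 := (Real.logb_self_eq_one (by norm_num)).symm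
      _ ≤ _ := Real.logb_le_logb_of_le (by norm_num) (by norm_num) h2
  rw [Real.logb_pow, show (1:ℝ) + 1/(m:ℝ) = ((m:ℝ)+1)/m by field_simp,
    Real.logb_div (by positivity) (ne_of_gt hm0)] at h3
  linarith

lemma binent_continuous : Continuous binent := by
  have he : binent = fun p => (Real.negMulLog p + Real.negMulLog (1-p)) / Real.log 2 := by
    funext p
    simp only [binent, Real.negMulLog, Real.logb]
    ring
  rw [he]; fun_prop


lemma fTilde_continuous (L : ℕ) : Continuous (fTilde L) := by
  unfold fTilde
  have h2 : Continuous fun δ:ℝ => binent (δ * (L:ℝ) / 4) := binent_continuous.comp (by fun_prop)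
  exact ((((continuous_const.sub binent_continuous).sub continuous_const).add
    ((continuous_id.div_const 2).mul continuous_const)).add (continuous_const.mul h2))

lemma part1 (L : ℕ) (hL : 4 ≤ L) : 0 < fTilde L 0 := by
  have hL0 : (0:ℝ) < L := by exact_mod_cast (by omega : 0 < L)
  have hCpos : 0 < (L.choose (L/2) : ℝ) := by exact_mod_cast Nat.choose_pos (Nat.div_le_self L 2)
  have hClt : (L.choose (L/2) : ℝ) < 2^L := by
    have hnat : L.choose (L/2) + 1 ≤ 2^L := by
      rw [← Nat.sum_range_choose L]
      calc L.choose (L/2) + 1 = ∑ i ∈ ({L/2, 0} : Finset ℕ), L.choose i := by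
            rw [Finset.sum_pair (by omega : L/2 ≠ 0)]; simp
        _ ≤ _ := Finset.sum_le_sum_of_subset (by
            intro i hi; simp only [Finset.mem_insert, Finset.mem_singleton] at hi
            simp only [Finset.mem_range]; omega)
    have : (L.choose (L/2) : ℝ) + 1 ≤ (2:ℝ)^L := by exact_mod_cast hnat
    linarith
  have hlogb : Real.logb 2 (L.choose (L/2)) < L := by
    have h := Real.logb_lt_logb (b := 2) (by norm_num) hCpos hClt
    rwa [Real.logb_pow, Real.logb_self_eq_one (by norm_num), mul_one] at h
  have heq : fTilde L 0 = 1 - (1/(L:ℝ)) * Real.logb 2 (L.choose (L/2)) := by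
    simp [fTilde, binent]
  rw [heq]
  have hinv : (0:ℝ) < 1/(L:ℝ) := by positivity
  have := mul_lt_mul_of_pos_left hlogb hinv
  have h1 : (1/(L:ℝ)) * L = 1 := by field_simp
  linarith

lemma part2 (L : ℕ) (hL : 4 ≤ L) (hLe : Even L) : fTilde L (1 / (L : ℝ)) < 0 := by
  obtain ⟨n, hLn⟩ := hLe
  have hn : 2 ≤ n := by omega
  set N : ℝ := (n : ℝ) with hNdef
  have hN : (2:ℝ) ≤ N := by rw [hNdef]; exact_mod_cast hn
  have hN0 : (0:ℝ) < N := by linarith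
  have hL2 : (L:ℝ) = 2*N := by rw [hLn]; push_cast; ring
  have hdiv : L/2 = n := by omega
  have hcb : L.choose (L/2) = Nat.centralBinom n := by
    rw [hdiv, hLn, Nat.centralBinom, two_mul]
  set Cb : ℝ := (Nat.centralBinom n : ℝ) with hCbdef
  have hCbpos : 0 < Cb := by rw [hCbdef]; exact_mod_cast Nat.centralBinom_pos n
  -- lower bound on logb Cb
  have hC : 2*N - 1 - (1/2) * Real.logb 2 N ≤ Real.logb 2 Cb := by
    have h16 : (16:ℝ)^n ≤ 4 * N * Cb^2 := by
      rw [hCbdef, hNdef]; exact_mod_cast aux16 n (by omega)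
    have hlb := Real.logb_le_logb_of_le (b := 2) (by norm_num) (by positivity) h16
    have hlhs : Real.logb 2 ((16:ℝ)^n) = 4 * N := by
      rw [show (16:ℝ) = 2^(4:ℕ) by norm_num, ← pow_mul, Real.logb_pow,
        Real.logb_self_eq_one (by norm_num)]
      push_cast; ring
    have hrhs : Real.logb 2 (4 * N * Cb^2) = 2 + Real.logb 2 N + 2 * Real.logb 2 Cb := by
      rw [Real.logb_mul (by positivity) (by positivity),
        Real.logb_mul (by norm_num) (ne_of_gt hN0), Real.logb_pow,
        show (4:ℝ) = 2^(2:ℕ) by norm_num, Real.logb_pow,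
        Real.logb_self_eq_one (by norm_num)]
      push_cast; ring
    rw [hlhs, hrhs] at hlb
    linarith
  have hB : 2*N * binent (1/(2*N)) =
      Real.logb 2 (2*N) + (2*N - 1) * (Real.logb 2 (2*N) - Real.logb 2 (2*N-1)) :=
    binent_inv (by linarith)
  have hpow : 1 ≤ (2*N - 1) * (Real.logb 2 (2*N) - Real.logb 2 (2*N-1)) := by
    have h := pow_succ_logb (2*n-1) (by omega)
    have hc1 : ((2*n-1 : ℕ):ℝ) = 2*N - 1 := by
      rw [Nat.cast_sub (by omega : 1 ≤ 2*n)]; push_cast; ring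
    rw [hc1, show 2*N - 1 + 1 = 2*N by ring] at h
    exact h
  have hlog2N : Real.logb 2 (2*N) = 1 + Real.logb 2 N := by
    rw [Real.logb_mul (by norm_num) (ne_of_gt hN0), Real.logb_self_eq_one (by norm_num)]
  have hq : binent (1/4) < 1 := by
    have := logb3_gt
    rw [binent_quarter]; linarith
  have hexp : 2*N * fTilde L (1/(L:ℝ)) =
      2*N - 2*N * binent (1/(2*N)) - Real.logb 2 Cb + (1/2) * Real.logb 2 N + binent (1/4) := by
    rw [fTilde, hcb, hL2, show (1:ℝ)/(2*N) * (2*N) / 4 = 1/4 by field_simp,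
      show (2*N)/2 = N by ring, ← hCbdef]
    field_simp
  rw [hB] at hexp
  have key : 2*N * fTilde L (1/(L:ℝ)) < 0 := by
    rw [hexp]
    linarith
  nlinarith [key, hN0]

lemma part3 {f : ℝ → ℝ} {b : ℝ} (hf : Continuous f) (hb : 0 < b)
    (h0 : 0 < f 0) (hb' : f b < 0) :
    ∃ δt : ℝ, δt ∈ Set.Ioo 0 b ∧ f δt = 0 ∧ ∀ δ : ℝ, 0 ≤ δ → δ < δt → 0 < f δ := by
  set S : Set ℝ := Set.Icc 0 b ∩ {x | f x ≤ 0} with hSdef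
  have hSne : S.Nonempty := ⟨b, ⟨⟨le_of_lt hb, le_refl b⟩, le_of_lt hb'⟩⟩
  have hSbdd : BddBelow S := ⟨0, fun x hx => hx.1.1⟩
  have hSclosed : IsClosed S := isClosed_Icc.inter (isClosed_le hf continuous_const)
  set δt : ℝ := sInf S with hδt
  have hmem : δt ∈ S := hSclosed.csInf_mem hSne hSbdd
  have hδt0 : 0 ≤ δt := hmem.1.1
  have hδtb : δt ≤ b := hmem.1.2
  have hpos : ∀ δ : ℝ, 0 ≤ δ → δ < δt → 0 < f δ := by
    intro δ hδ0 hδlt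
    by_contra h
    push_neg at h
    have : δ ∈ S := ⟨⟨hδ0, le_trans (le_of_lt hδlt) hδtb⟩, h⟩
    exact absurd (csInf_le hSbdd this) (not_le.mpr hδlt)
  have hne0 : δt ≠ 0 := by
    intro h
    have := hmem.2
    rw [h] at this
    exact absurd h0 (not_lt.mpr this)
  have hδtpos : 0 < δt := lt_of_le_of_ne hδt0 (Ne.symm hne0)
  have hroot : f δt = 0 := by
    rcases lt_trichotomy (f δt) 0 with hlt | heq | hgt
    · -- contradiction via continuity
      have hopen : IsOpen {x : ℝ | f x < 0} := isOpen_lt hf continuous_const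
      obtain ⟨ε, hε, hball⟩ := Metric.isOpen_iff.mp hopen δt hlt
      set y : ℝ := max (δt - ε/2) (δt/2) with hy
      have hylt : y < δt := max_lt (by linarith) (by linarith)
      have hy0 : 0 < y := lt_of_lt_of_le (by linarith : (0:ℝ) < δt/2) (le_max_right _ _)
      have hyball : y ∈ Metric.ball δt ε := by
        rw [Metric.mem_ball, Real.dist_eq, abs_sub_lt_iff]
        constructor
        · linarith
        · have : δt - ε/2 ≤ y := le_max_left _ _
          linarith
      have hyS : y ∈ S := ⟨⟨le_of_lt hy0, le_trans (le_of_lt hylt) hδtb⟩,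
        (le_of_lt (hball hyball) : f y ≤ 0)⟩
      exact absurd (csInf_le hSbdd hyS) (not_le.mpr hylt)
    · exact heq
    · exact absurd hmem.2 (not_le.mpr hgt)
  have hneb : δt ≠ b := by
    intro h
    rw [h] at hroot
    rw [hroot] at hb'
    exact lt_irrefl 0 hb'
  exact ⟨δt, ⟨hδtpos, lt_of_le_of_ne hδtb hneb⟩, hroot, hpos⟩

/-- For even `L ≥ 4`: `f̃_L(0) > 0`, `f̃_L(1/L) < 0`, and hence `f̃_L` has a root
`δ̃ ∈ (0, 1/L)` with `f̃_L > 0` on `[0, δ̃)`. -/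
theorem stmt_17 (L : ℕ) (hL : 4 ≤ L) (hLe : Even L) :
    0 < fTilde L 0 ∧ fTilde L (1 / (L : ℝ)) < 0 ∧
    ∃ δt : ℝ, δt ∈ Set.Ioo 0 (1 / (L : ℝ)) ∧ fTilde L δt = 0 ∧
      ∀ δ : ℝ, 0 ≤ δ → δ < δt → 0 < fTilde L δ := by
  have h1 := part1 L hL
  have h2 := part2 L hL hLe
  have hbpos : (0:ℝ) < 1 / (L:ℝ) := by
    have : (0:ℝ) < L := by exact_mod_cast (by omega : 0 < L)
    positivity
  exact ⟨h1, h2, part3 (fTilde_continuous L) hbpos h1 h2⟩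
end
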